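/- Consider four parties A, B, C, D and the following quantum circuit. For each 3-element subset S of {A,B,C,D} (a source) and each 2-element subset T ⊂ S, fix a finite-dimensional complex Hilbert space H_{S,T}, and for each 2-element subset T of {A,B,C,D} (a transformation) and each party X ∈ T, fix a finite-dimensional complex Hilbert space K_{T,X}. For each source S, let ψ_S be a unit vector in ⊗_{T ⊂ S, |T|=2} H_{S,T}. For each transformation T, let U_T be a unitary (linear isometric equivalence) from ⊗_{S ⊃ T, |S|=3} H_{S,T} onto ⊗_{X ∈ T} K_{T,X}. For each party X and each bit x ∈ {0,1}, let Π_X^x be orthogonal projections on ⊗_{T ∋ X, |T|=2} K_{T,X} with Π_X^0 + Π_X^1 = 1. Define, for bits a,b,c,d, the probability P(a,b,c,d) = ⟨ψ| U† (Π_A^a ⊗ Π_B^b ⊗ Π_C^c ⊗ Π_D^d) U |ψ⟩, where |ψ⟩ is the tensor product of the four source states ψ_S and U is the tensor product of the six unitaries U_T (with the implicit reordering of tensor factors). Then it is impossible that P(a,b,c,d) = 1/2 whenever a=b=c=d and P(a,b,c,d) = 0 otherwise. -/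

import Mathlib

open scoped Matrix

set_option linter.unusedSectionVars false
set_option maxHeartbeats 1600000
set_option synthInstance.maxSize 1024
set_option synthInstance.maxHeartbeats 800000

namespace CoordAux
local notation "conj'" => starRingEnd ℂ



lemma sum_sum_eq {α β : Type} [Fintype α] [Fintype β] (F : α → β → ℂ) :
    ∑ x, ∑ y, F x y = ∑ p : α × β, F p.1 p.2 :=
  (Fintype.sum_prod_type (fun p => F p.1 p.2)).symm

lemma conj_mul_self (z : ℂ) : conj' z * z = (‖z‖^2 : ℝ) := by
  rw [mul_comm, Complex.mul_conj]; norm_cast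
  exact Complex.normSq_eq_norm_sq z

lemma sum_conj_mul_self_coe {ι : Type} [Fintype ι] (f : ι → ℂ) :
    ∑ i, conj' (f i) * f i = ((∑ i, ‖f i‖^2 : ℝ) : ℂ) := by
  push_cast
  exact Finset.sum_congr rfl fun i _ => by rw [conj_mul_self]; push_cast; ring

lemma sum_conj_mul_self_zero {ι : Type} [Fintype ι] (f : ι → ℂ)
    (h : ∑ i, conj' (f i) * f i = 0) : ∀ i, f i = 0 := by
  rw [sum_conj_mul_self_coe] at h
  have h2 : ∑ i, ‖f i‖^2 = (0:ℝ) := by exact_mod_cast h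
  have hnn : ∀ i ∈ Finset.univ (α := ι), (0:ℝ) ≤ ‖f i‖^2 := fun i _ => by positivity
  intro i
  have := (Finset.sum_eq_zero_iff_of_nonneg hnn).mp h2 i (Finset.mem_univ i)
  simpa using this

lemma quad_form {m n : Type} [Fintype m] [Fintype n] (U : Matrix m n ℂ) (M : Matrix m m ℂ)
    (v : n → ℂ) :
    star v ⬝ᵥ (Uᴴ * M * U) *ᵥ v = ∑ k, ∑ k', conj' ((U *ᵥ v) k) * M k k' * ((U *ᵥ v) k') := by
  rw [← Matrix.mulVec_mulVec, ← Matrix.mulVec_mulVec, Matrix.dotProduct_mulVec,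
    ← Matrix.star_mulVec]
  simp only [dotProduct, Pi.star_apply, Matrix.mulVec, dotProduct,
    Finset.mul_sum, RCLike.star_def, mul_assoc]

section opip
variable {A B C D : Type} [Fintype A] [Fintype B] [Fintype C] [Fintype D]
variable [DecidableEq A] [DecidableEq B] [DecidableEq C] [DecidableEq D]

noncomputable def ip (f g : A × B × C × D → ℂ) : ℂ := ∑ k, conj' (f k) * g k

noncomputable def opA (M : Matrix A A ℂ) (f : A × B × C × D → ℂ) : A × B × C × D → ℂ :=
  fun k => ∑ a, M k.1 a * f (a, k.2)
noncomputable def opB (M : Matrix B B ℂ) (f : A × B × C × D → ℂ) : A × B × C × D → ℂ :=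
  fun k => ∑ b, M k.2.1 b * f (k.1, b, k.2.2)
noncomputable def opC (M : Matrix C C ℂ) (f : A × B × C × D → ℂ) : A × B × C × D → ℂ :=
  fun k => ∑ c, M k.2.2.1 c * f (k.1, k.2.1, c, k.2.2.2)
noncomputable def opD (M : Matrix D D ℂ) (f : A × B × C × D → ℂ) : A × B × C × D → ℂ :=
  fun k => ∑ d, M k.2.2.2 d * f (k.1, k.2.1, k.2.2.1, d)

@[simp] lemma opA_one (f : A × B × C × D → ℂ) : opA 1 f = f := by
  funext k; simp [opA, Matrix.one_apply]
@[simp] lemma opB_one (f : A × B × C × D → ℂ) : opB 1 f = f := by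
  funext k; simp [opB, Matrix.one_apply]
@[simp] lemma opC_one (f : A × B × C × D → ℂ) : opC 1 f = f := by
  funext k; simp [opC, Matrix.one_apply]
@[simp] lemma opD_one (f : A × B × C × D → ℂ) : opD 1 f = f := by
  funext k; simp [opD, Matrix.one_apply]

lemma opA_sub (M N : Matrix A A ℂ) (f : A × B × C × D → ℂ) :
    opA (M - N) f = opA M f - opA N f := by
  funext k; simp [opA, Matrix.sub_apply, sub_mul, Finset.sum_sub_distrib]
lemma opB_sub (M N : Matrix B B ℂ) (f : A × B × C × D → ℂ) :
    opB (M - N) f = opB M f - opB N f := by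
  funext k; simp [opB, Matrix.sub_apply, sub_mul, Finset.sum_sub_distrib]
lemma opA_addM (M N : Matrix A A ℂ) (f : A × B × C × D → ℂ) :
    opA (M + N) f = opA M f + opA N f := by
  funext k; simp [opA, Matrix.add_apply, add_mul, Finset.sum_add_distrib]
lemma opB_addM (M N : Matrix B B ℂ) (f : A × B × C × D → ℂ) :
    opB (M + N) f = opB M f + opB N f := by
  funext k; simp [opB, Matrix.add_apply, add_mul, Finset.sum_add_distrib]
lemma opC_addM (M N : Matrix C C ℂ) (f : A × B × C × D → ℂ) :
    opC (M + N) f = opC M f + opC N f := by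
  funext k; simp [opC, Matrix.add_apply, add_mul, Finset.sum_add_distrib]
lemma opD_addM (M N : Matrix D D ℂ) (f : A × B × C × D → ℂ) :
    opD (M + N) f = opD M f + opD N f := by
  funext k; simp [opD, Matrix.add_apply, add_mul, Finset.sum_add_distrib]

lemma opA_vadd (M : Matrix A A ℂ) (f g : A × B × C × D → ℂ) :
    opA M (f + g) = opA M f + opA M g := by
  funext k; simp [opA, mul_add, Finset.sum_add_distrib]
lemma opA_vsub (M : Matrix A A ℂ) (f g : A × B × C × D → ℂ) :
    opA M (f - g) = opA M f - opA M g := by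
  funext k; simp [opA, mul_sub, Finset.sum_sub_distrib]
lemma opB_vadd (M : Matrix B B ℂ) (f g : A × B × C × D → ℂ) :
    opB M (f + g) = opB M f + opB M g := by
  funext k; simp [opB, mul_add, Finset.sum_add_distrib]
lemma opB_vsub (M : Matrix B B ℂ) (f g : A × B × C × D → ℂ) :
    opB M (f - g) = opB M f - opB M g := by
  funext k; simp [opB, mul_sub, Finset.sum_sub_distrib]
lemma opC_vadd (M : Matrix C C ℂ) (f g : A × B × C × D → ℂ) :
    opC M (f + g) = opC M f + opC M g := by
  funext k; simp [opC, mul_add, Finset.sum_add_distrib]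
lemma opC_vsub (M : Matrix C C ℂ) (f g : A × B × C × D → ℂ) :
    opC M (f - g) = opC M f - opC M g := by
  funext k; simp [opC, mul_sub, Finset.sum_sub_distrib]
lemma opD_vadd (M : Matrix D D ℂ) (f g : A × B × C × D → ℂ) :
    opD M (f + g) = opD M f + opD M g := by
  funext k; simp [opD, mul_add, Finset.sum_add_distrib]
lemma opD_vsub (M : Matrix D D ℂ) (f g : A × B × C × D → ℂ) :
    opD M (f - g) = opD M f - opD M g := by
  funext k; simp [opD, mul_sub, Finset.sum_sub_distrib]

lemma ip_add_right (f g h : A × B × C × D → ℂ) : ip f (g + h) = ip f g + ip f h := by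
  simp [ip, mul_add, Finset.sum_add_distrib]
lemma ip_sub_right (f g h : A × B × C × D → ℂ) : ip f (g - h) = ip f g - ip f h := by
  simp [ip, mul_sub, Finset.sum_sub_distrib]
lemma ip_sub_left (f g h : A × B × C × D → ℂ) : ip (f - g) h = ip f h - ip g h := by
  simp [ip, map_sub, sub_mul, Finset.sum_sub_distrib]
lemma ip_conj (f g : A × B × C × D → ℂ) : conj' (ip f g) = ip g f := by
  simp only [ip, map_sum, map_mul, Complex.conj_conj]
  exact Finset.sum_congr rfl fun k _ => mul_comm _ _

lemma ip_opA_left (M : Matrix A A ℂ) (f g : A × B × C × D → ℂ) :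
    ip (opA M f) g = ip f (opA Mᴴ g) := by
  simp only [ip, opA, map_sum, map_mul, Matrix.conjTranspose_apply, RCLike.star_def,
    Finset.sum_mul, Finset.mul_sum]
  rw [sum_sum_eq, sum_sum_eq]
  refine Fintype.sum_equiv ⟨fun p => ((p.2, p.1.2), p.1.1), fun p => ((p.2, p.1.2), p.1.1),
    fun p => rfl, fun p => rfl⟩ _ _ (fun p => ?_)
  simp only [Equiv.coe_fn_mk]; ring

lemma ip_opB_left (M : Matrix B B ℂ) (f g : A × B × C × D → ℂ) :
    ip (opB M f) g = ip f (opB Mᴴ g) := by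
  simp only [ip, opB, map_sum, map_mul, Matrix.conjTranspose_apply, RCLike.star_def,
    Finset.sum_mul, Finset.mul_sum]
  rw [sum_sum_eq, sum_sum_eq]
  refine Fintype.sum_equiv ⟨fun p => ((p.1.1, p.2, p.1.2.2), p.1.2.1), fun p => ((p.1.1, p.2, p.1.2.2), p.1.2.1),
    fun p => rfl, fun p => rfl⟩ _ _ (fun p => ?_)
  simp only [Equiv.coe_fn_mk]; ring

lemma ip_opC_left (M : Matrix C C ℂ) (f g : A × B × C × D → ℂ) :
    ip (opC M f) g = ip f (opC Mᴴ g) := by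
  simp only [ip, opC, map_sum, map_mul, Matrix.conjTranspose_apply, RCLike.star_def,
    Finset.sum_mul, Finset.mul_sum]
  rw [sum_sum_eq, sum_sum_eq]
  refine Fintype.sum_equiv ⟨fun p => ((p.1.1, p.1.2.1, p.2, p.1.2.2.2), p.1.2.2.1),
    fun p => ((p.1.1, p.1.2.1, p.2, p.1.2.2.2), p.1.2.2.1),
    fun p => rfl, fun p => rfl⟩ _ _ (fun p => ?_)
  simp only [Equiv.coe_fn_mk]; ring

lemma ip_opD_left (M : Matrix D D ℂ) (f g : A × B × C × D → ℂ) :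
    ip (opD M f) g = ip f (opD Mᴴ g) := by
  simp only [ip, opD, map_sum, map_mul, Matrix.conjTranspose_apply, RCLike.star_def,
    Finset.sum_mul, Finset.mul_sum]
  rw [sum_sum_eq, sum_sum_eq]
  refine Fintype.sum_equiv ⟨fun p => ((p.1.1, p.1.2.1, p.1.2.2.1, p.2), p.1.2.2.2),
    fun p => ((p.1.1, p.1.2.1, p.1.2.2.1, p.2), p.1.2.2.2),
    fun p => rfl, fun p => rfl⟩ _ _ (fun p => ?_)
  simp only [Equiv.coe_fn_mk]; ring

lemma opA_opA (M N : Matrix A A ℂ) (f : A × B × C × D → ℂ) :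
    opA M (opA N f) = opA (M * N) f := by
  funext k
  simp only [opA, Matrix.mul_apply, Finset.mul_sum, Finset.sum_mul]
  rw [sum_sum_eq, sum_sum_eq]
  refine Fintype.sum_equiv (Equiv.prodComm _ _) _ _ (fun p => ?_)
  simp only [Equiv.prodComm_apply, Prod.swap]; ring

lemma opB_opB (M N : Matrix B B ℂ) (f : A × B × C × D → ℂ) :
    opB M (opB N f) = opB (M * N) f := by
  funext k
  simp only [opB, Matrix.mul_apply, Finset.mul_sum, Finset.sum_mul]
  rw [sum_sum_eq, sum_sum_eq]
  refine Fintype.sum_equiv (Equiv.prodComm _ _) _ _ (fun p => ?_)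
  simp only [Equiv.prodComm_apply, Prod.swap]; ring

lemma opC_opC (M N : Matrix C C ℂ) (f : A × B × C × D → ℂ) :
    opC M (opC N f) = opC (M * N) f := by
  funext k
  simp only [opC, Matrix.mul_apply, Finset.mul_sum, Finset.sum_mul]
  rw [sum_sum_eq, sum_sum_eq]
  refine Fintype.sum_equiv (Equiv.prodComm _ _) _ _ (fun p => ?_)
  simp only [Equiv.prodComm_apply, Prod.swap]; ring

lemma opD_opD (M N : Matrix D D ℂ) (f : A × B × C × D → ℂ) :
    opD M (opD N f) = opD (M * N) f := by
  funext k
  simp only [opD, Matrix.mul_apply, Finset.mul_sum, Finset.sum_mul]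
  rw [sum_sum_eq, sum_sum_eq]
  refine Fintype.sum_equiv (Equiv.prodComm _ _) _ _ (fun p => ?_)
  simp only [Equiv.prodComm_apply, Prod.swap]; ring

lemma opC_opB (M : Matrix C C ℂ) (N : Matrix B B ℂ) (f : A × B × C × D → ℂ) :
    opC M (opB N f) = opB N (opC M f) := by
  funext k
  simp only [opB, opC, Finset.mul_sum]
  rw [Finset.sum_comm]
  exact Finset.sum_congr rfl fun c _ => Finset.sum_congr rfl fun b _ => by ring
lemma opD_opB (M : Matrix D D ℂ) (N : Matrix B B ℂ) (f : A × B × C × D → ℂ) :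
    opD M (opB N f) = opB N (opD M f) := by
  funext k
  simp only [opB, opD, Finset.mul_sum]
  rw [Finset.sum_comm]
  exact Finset.sum_congr rfl fun c _ => Finset.sum_congr rfl fun b _ => by ring
lemma opD_opC (M : Matrix D D ℂ) (N : Matrix C C ℂ) (f : A × B × C × D → ℂ) :
    opD M (opC N f) = opC N (opD M f) := by
  funext k
  simp only [opC, opD, Finset.mul_sum]
  rw [Finset.sum_comm]
  exact Finset.sum_congr rfl fun c _ => Finset.sum_congr rfl fun b _ => by ring

lemma op_all (MA : Matrix A A ℂ) (MB : Matrix B B ℂ) (MC : Matrix C C ℂ) (MD : Matrix D D ℂ)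
    (f : A × B × C × D → ℂ) (k : A × B × C × D) :
    opA MA (opB MB (opC MC (opD MD f))) k
      = ∑ k', (MA k.1 k'.1 * MB k.2.1 k'.2.1 * MC k.2.2.1 k'.2.2.1 * MD k.2.2.2 k'.2.2.2) * f k' := by
  simp only [opA, opB, opC, opD, Finset.mul_sum, Fintype.sum_prod_type]
  refine Finset.sum_congr rfl fun a _ => Finset.sum_congr rfl fun b _ =>
    Finset.sum_congr rfl fun c _ => Finset.sum_congr rfl fun d _ => by ring

end opip

lemma sum2_factor {F R : Type} [Fintype F] [Fintype R] (A : F → ℂ) (P : R → ℂ) :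
    ∑ f : F × R, A f.1 * P f.2 = (∑ x, A x) * (∑ y, P y) := by
  rw [Finset.sum_mul_sum]
  exact Fintype.sum_prod_type _

lemma sum3_factor {F1 F2 F3 : Type} [Fintype F1] [Fintype F2] [Fintype F3]
    (A : F1 → ℂ) (B : F2 → ℂ) (C : F3 → ℂ) :
    ∑ f : F1 × F2 × F3, A f.1 * B f.2.1 * C f.2.2 = (∑ x, A x) * (∑ y, B y) * (∑ z, C z) := by
  calc ∑ f : F1 × F2 × F3, A f.1 * B f.2.1 * C f.2.2
      = ∑ f : F1 × F2 × F3, A f.1 * ((fun r : F2 × F3 => B r.1 * C r.2) f.2) :=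
        Finset.sum_congr rfl fun f _ => by ring
    _ = (∑ x, A x) * (∑ r : F2 × F3, (fun r : F2 × F3 => B r.1 * C r.2) r) := sum2_factor A (fun r : F2 × F3 => B r.1 * C r.2)
    _ = (∑ x, A x) * (∑ r : F2 × F3, B r.1 * C r.2) := rfl
    _ = (∑ x, A x) * ((∑ y, B y) * (∑ z, C z)) := by rw [sum2_factor B C]
    _ = (∑ x, A x) * (∑ y, B y) * (∑ z, C z) := by ring

lemma sum4_factor {F1 F2 F3 F4 : Type} [Fintype F1] [Fintype F2] [Fintype F3] [Fintype F4]
    (A : F1 → ℂ) (B : F2 → ℂ) (C : F3 → ℂ) (D : F4 → ℂ) :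
    ∑ f : F1 × F2 × F3 × F4, A f.1 * B f.2.1 * C f.2.2.1 * D f.2.2.2
      = (∑ x, A x) * (∑ x, B x) * (∑ x, C x) * (∑ x, D x) := by
  calc ∑ f : F1 × F2 × F3 × F4, A f.1 * B f.2.1 * C f.2.2.1 * D f.2.2.2
      = ∑ f : F1 × (F2 × F3 × F4), A f.1 *
          ((fun r : F2 × F3 × F4 => B r.1 * C r.2.1 * D r.2.2) f.2) :=
        Finset.sum_congr rfl fun f _ => by ring
    _ = (∑ x, A x) * (∑ r : F2 × F3 × F4, (fun r : F2 × F3 × F4 => B r.1 * C r.2.1 * D r.2.2) r) := sum2_factor A (fun r : F2 × F3 × F4 => B r.1 * C r.2.1 * D r.2.2)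
    _ = (∑ x, A x) * (∑ r : F2 × F3 × F4, B r.1 * C r.2.1 * D r.2.2) := rfl
    _ = (∑ x, A x) * ((∑ x, B x) * (∑ x, C x) * (∑ x, D x)) := by rw [sum3_factor B C D]
    _ = _ := by ring

lemma sum6_factor {F1 F2 F3 F4 F5 F6 : Type}
    [Fintype F1] [Fintype F2] [Fintype F3] [Fintype F4] [Fintype F5] [Fintype F6]
    (A : F1 → ℂ) (B : F2 → ℂ) (C : F3 → ℂ) (D : F4 → ℂ) (E : F5 → ℂ) (G : F6 → ℂ) :
    ∑ f : F1 × F2 × F3 × F4 × F5 × F6,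
        A f.1 * B f.2.1 * C f.2.2.1 * D f.2.2.2.1 * E f.2.2.2.2.1 * G f.2.2.2.2.2
      = (∑ x, A x) * (∑ x, B x) * (∑ x, C x) * (∑ x, D x) * (∑ x, E x) * (∑ x, G x) := by
  calc ∑ f : F1 × F2 × F3 × F4 × F5 × F6,
        A f.1 * B f.2.1 * C f.2.2.1 * D f.2.2.2.1 * E f.2.2.2.2.1 * G f.2.2.2.2.2
      = ∑ f : F1 × (F2 × F3 × F4 × F5 × F6), A f.1 *
          ((fun r : F2 × F3 × F4 × F5 × F6 =>
            B r.1 * C r.2.1 * D r.2.2.1 * E r.2.2.2.1 * G r.2.2.2.2) f.2) :=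
        Finset.sum_congr rfl fun f _ => by ring
    _ = (∑ x, A x) * (∑ r : F2 × F3 × F4 × F5 × F6,
          (fun r : F2 × F3 × F4 × F5 × F6 => B r.1 * C r.2.1 * D r.2.2.1 * E r.2.2.2.1 * G r.2.2.2.2) r) :=
        sum2_factor A (fun r : F2 × F3 × F4 × F5 × F6 => B r.1 * C r.2.1 * D r.2.2.1 * E r.2.2.2.1 * G r.2.2.2.2)
    _ = (∑ x, A x) * (∑ r : F2 × F3 × F4 × F5 × F6,
          B r.1 * C r.2.1 * D r.2.2.1 * E r.2.2.2.1 * G r.2.2.2.2) := rfl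
    _ = (∑ x, A x) * (∑ r : F2 × (F3 × F4 × F5 × F6), B r.1 *
          ((fun q : F3 × F4 × F5 × F6 => C q.1 * D q.2.1 * E q.2.2.1 * G q.2.2.2) r.2)) := by
        rw [Finset.sum_congr rfl fun (r : F2 × F3 × F4 × F5 × F6) _ =>
          show B r.1 * C r.2.1 * D r.2.2.1 * E r.2.2.2.1 * G r.2.2.2.2
            = B r.1 * ((fun q : F3 × F4 × F5 × F6 => C q.1 * D q.2.1 * E q.2.2.1 * G q.2.2.2) r.2)
          from by ring]
    _ = (∑ x, A x) * ((∑ x, B x) * (∑ q : F3 × F4 × F5 × F6,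
          C q.1 * D q.2.1 * E q.2.2.1 * G q.2.2.2)) := by rw [sum2_factor B (fun q : F3 × F4 × F5 × F6 => C q.1 * D q.2.1 * E q.2.2.1 * G q.2.2.2)]
    _ = (∑ x, A x) * ((∑ x, B x) * ((∑ x, C x) * (∑ x, D x) * (∑ x, E x) * (∑ x, G x))) := by
        rw [sum4_factor C D E G]
    _ = _ := by ring

lemma entry_iso {F c : Type} [Fintype F] [Fintype c] [DecidableEq c]
    (V : Matrix F c ℂ) (h : Vᴴ * V = 1) (x y : c) :
    ∑ f, conj' (V f x) * V f y = if x = y then 1 else 0 := by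
  have := congrFun (congrFun h x) y
  simpa [Matrix.mul_apply, Matrix.conjTranspose_apply, Matrix.one_apply,
    RCLike.star_def] using this

lemma entry_coiso {F c : Type} [Fintype F] [Fintype c] [DecidableEq F]
    (V : Matrix F c ℂ) (h : V * Vᴴ = 1) (p p' : F) :
    ∑ x, V p x * conj' (V p' x) = if p = p' then 1 else 0 := by
  have := congrFun (congrFun h p) p'
  simpa [Matrix.mul_apply, Matrix.conjTranspose_apply, Matrix.one_apply,
    RCLike.star_def] using this

lemma tensor3_iso {F1 F2 F3 c1 c2 c3 : Type}
    [Fintype F1] [Fintype F2] [Fintype F3] [Fintype c1] [Fintype c2] [Fintype c3]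
    [DecidableEq c1] [DecidableEq c2] [DecidableEq c3]
    (V1 : Matrix F1 c1 ℂ) (V2 : Matrix F2 c2 ℂ) (V3 : Matrix F3 c3 ℂ)
    (h1 : V1ᴴ * V1 = 1) (h2 : V2ᴴ * V2 = 1) (h3 : V3ᴴ * V3 = 1)
    (a a' : c1) (b b' : c2) (c c' : c3) :
    ∑ f : F1 × F2 × F3, conj' (V1 f.1 a * V2 f.2.1 b * V3 f.2.2 c) *
      (V1 f.1 a' * V2 f.2.1 b' * V3 f.2.2 c')
    = if a = a' ∧ b = b' ∧ c = c' then 1 else 0 := by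
  calc ∑ f : F1 × F2 × F3, conj' (V1 f.1 a * V2 f.2.1 b * V3 f.2.2 c) *
      (V1 f.1 a' * V2 f.2.1 b' * V3 f.2.2 c')
      = ∑ f : F1 × F2 × F3, ((fun f1 => conj' (V1 f1 a) * V1 f1 a') f.1) *
          ((fun f2 => conj' (V2 f2 b) * V2 f2 b') f.2.1) *
          ((fun f3 => conj' (V3 f3 c) * V3 f3 c') f.2.2) :=
        Finset.sum_congr rfl fun f _ => by simp only [map_mul]; ring
    _ = (∑ f1, conj' (V1 f1 a) * V1 f1 a') * (∑ f2, conj' (V2 f2 b) * V2 f2 b')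
          * (∑ f3, conj' (V3 f3 c) * V3 f3 c') :=
        sum3_factor (fun f1 => conj' (V1 f1 a) * V1 f1 a')
          (fun f2 => conj' (V2 f2 b) * V2 f2 b') (fun f3 => conj' (V3 f3 c) * V3 f3 c')
    _ = _ := by
        rw [entry_iso V1 h1, entry_iso V2 h2, entry_iso V3 h3]
        by_cases hA : a = a' <;> by_cases hB : b = b' <;> by_cases hC : c = c' <;>
          simp [hA, hB, hC]

lemma tensor6_coiso {r1 r2 r3 r4 r5 r6 c1 c2 c3 c4 c5 c6 : Type}
    [Fintype r1] [Fintype r2] [Fintype r3] [Fintype r4] [Fintype r5] [Fintype r6]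
    [Fintype c1] [Fintype c2] [Fintype c3] [Fintype c4] [Fintype c5] [Fintype c6]
    [DecidableEq r1] [DecidableEq r2] [DecidableEq r3] [DecidableEq r4] [DecidableEq r5]
    [DecidableEq r6]
    (V1 : Matrix r1 c1 ℂ) (V2 : Matrix r2 c2 ℂ) (V3 : Matrix r3 c3 ℂ)
    (V4 : Matrix r4 c4 ℂ) (V5 : Matrix r5 c5 ℂ) (V6 : Matrix r6 c6 ℂ)
    (h1 : V1 * V1ᴴ = 1) (h2 : V2 * V2ᴴ = 1) (h3 : V3 * V3ᴴ = 1)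
    (h4 : V4 * V4ᴴ = 1) (h5 : V5 * V5ᴴ = 1) (h6 : V6 * V6ᴴ = 1)
    (p p' : r1) (q q' : r2) (r r' : r3) (s s' : r4) (t t' : r5) (u u' : r6) :
    ∑ x : c1 × c2 × c3 × c4 × c5 × c6,
      (V1 p x.1 * V2 q x.2.1 * V3 r x.2.2.1 * V4 s x.2.2.2.1 * V5 t x.2.2.2.2.1 *
        V6 u x.2.2.2.2.2) *
      conj' (V1 p' x.1 * V2 q' x.2.1 * V3 r' x.2.2.1 * V4 s' x.2.2.2.1 * V5 t' x.2.2.2.2.1 *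
        V6 u' x.2.2.2.2.2)
    = if p = p' ∧ q = q' ∧ r = r' ∧ s = s' ∧ t = t' ∧ u = u' then 1 else 0 := by
  calc ∑ x : c1 × c2 × c3 × c4 × c5 × c6,
      (V1 p x.1 * V2 q x.2.1 * V3 r x.2.2.1 * V4 s x.2.2.2.1 * V5 t x.2.2.2.2.1 *
        V6 u x.2.2.2.2.2) *
      conj' (V1 p' x.1 * V2 q' x.2.1 * V3 r' x.2.2.1 * V4 s' x.2.2.2.1 * V5 t' x.2.2.2.2.1 *
        V6 u' x.2.2.2.2.2)
      = ∑ x : c1 × c2 × c3 × c4 × c5 × c6,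
          ((fun y => V1 p y * conj' (V1 p' y)) x.1) *
          ((fun y => V2 q y * conj' (V2 q' y)) x.2.1) *
          ((fun y => V3 r y * conj' (V3 r' y)) x.2.2.1) *
          ((fun y => V4 s y * conj' (V4 s' y)) x.2.2.2.1) *
          ((fun y => V5 t y * conj' (V5 t' y)) x.2.2.2.2.1) *
          ((fun y => V6 u y * conj' (V6 u' y)) x.2.2.2.2.2) :=
        Finset.sum_congr rfl fun x _ => by simp only [map_mul]; ring
    _ = (∑ y, V1 p y * conj' (V1 p' y)) * (∑ y, V2 q y * conj' (V2 q' y)) *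
        (∑ y, V3 r y * conj' (V3 r' y)) * (∑ y, V4 s y * conj' (V4 s' y)) *
        (∑ y, V5 t y * conj' (V5 t' y)) * (∑ y, V6 u y * conj' (V6 u' y)) :=
        sum6_factor (fun y => V1 p y * conj' (V1 p' y)) (fun y => V2 q y * conj' (V2 q' y))
          (fun y => V3 r y * conj' (V3 r' y)) (fun y => V4 s y * conj' (V4 s' y))
          (fun y => V5 t y * conj' (V5 t' y)) (fun y => V6 u y * conj' (V6 u' y))
    _ = _ := by
        rw [entry_coiso V1 h1, entry_coiso V2 h2, entry_coiso V3 h3, entry_coiso V4 h4,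
          entry_coiso V5 h5, entry_coiso V6 h6]
        by_cases hA : p = p' <;> by_cases hB : q = q' <;> by_cases hC : r = r' <;>
          by_cases hD : s = s' <;> by_cases hE : t = t' <;> by_cases hF : u = u' <;>
          simp [hA, hB, hC, hD, hE, hF]


lemma key {A E F m n1 n2 : Type} [Fintype A] [Fintype E] [Fintype F] [Fintype m]
    [Fintype n1] [Fintype n2] [DecidableEq n1] [DecidableEq n2]
    (Ua : A → E → m → ℂ) (Up : F → n1 → n2 → ℂ)
    (hU : ∀ (y y' : n1 × n2), (∑ f, conj' (Up f y.1 y.2) * Up f y'.1 y'.2)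
      = if y = y' then 1 else 0)
    (M : Matrix A A ℂ) (u : m → n1 → ℂ) (w : n2 → ℂ) (x₀ : m) (y₁ : n1) (y₂ : n2) :
    ∑ k : (A × E) × F, conj' (Ua k.1.1 k.1.2 x₀) * conj' (Up k.2 y₁ y₂) *
      (∑ a' : A, M k.1.1 a' *
        (∑ z : m × n1 × n2, Ua a' k.1.2 z.1 * Up k.2 z.2.1 z.2.2 * (u z.1 z.2.1 * w z.2.2)))
    = (∑ t : (A × E) × A × m,
        conj' (Ua t.1.1 t.1.2 x₀) * M t.1.1 t.2.1 * Ua t.2.1 t.1.2 t.2.2 * u t.2.2 y₁) * w y₂ := by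
  have step1 : ∀ (j : A × E),
      (∑ f : F, conj' (Ua j.1 j.2 x₀) * conj' (Up f y₁ y₂) *
        (∑ a' : A, M j.1 a' *
          (∑ z : m × n1 × n2, Ua a' j.2 z.1 * Up f z.2.1 z.2.2 * (u z.1 z.2.1 * w z.2.2))))
      = ∑ a' : A, ∑ z : m × n1 × n2,
          (conj' (Ua j.1 j.2 x₀) * M j.1 a' * Ua a' j.2 z.1 * (u z.1 z.2.1 * w z.2.2)) *
          (∑ f : F, conj' (Up f y₁ y₂) * Up f z.2.1 z.2.2) := by
    intro j
    simp only [Finset.mul_sum, Finset.sum_mul]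
    rw [Finset.sum_comm]
    refine Finset.sum_congr rfl fun a' _ => ?_
    rw [Finset.sum_comm]
    exact Finset.sum_congr rfl fun z _ => Finset.sum_congr rfl fun f _ => by ring
  calc ∑ k : (A × E) × F, conj' (Ua k.1.1 k.1.2 x₀) * conj' (Up k.2 y₁ y₂) *
      (∑ a' : A, M k.1.1 a' *
        (∑ z : m × n1 × n2, Ua a' k.1.2 z.1 * Up k.2 z.2.1 z.2.2 * (u z.1 z.2.1 * w z.2.2)))
      = ∑ j : A × E, ∑ f : F, conj' (Ua j.1 j.2 x₀) * conj' (Up f y₁ y₂) *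
        (∑ a' : A, M j.1 a' *
          (∑ z : m × n1 × n2, Ua a' j.2 z.1 * Up f z.2.1 z.2.2 * (u z.1 z.2.1 * w z.2.2))) := by
        exact Fintype.sum_prod_type _
    _ = ∑ j : A × E, ∑ a' : A, ∑ z : m × n1 × n2,
          (conj' (Ua j.1 j.2 x₀) * M j.1 a' * Ua a' j.2 z.1 * (u z.1 z.2.1 * w z.2.2)) *
          (∑ f : F, conj' (Up f y₁ y₂) * Up f z.2.1 z.2.2) :=
        Finset.sum_congr rfl fun j _ => step1 j
    _ = ∑ j : A × E, ∑ a' : A, ∑ z : m × n1 × n2,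
          (conj' (Ua j.1 j.2 x₀) * M j.1 a' * Ua a' j.2 z.1 * (u z.1 z.2.1 * w z.2.2)) *
          (if (y₁, y₂) = z.2 then 1 else 0) := by
        refine Finset.sum_congr rfl fun j _ => Finset.sum_congr rfl fun a' _ =>
          Finset.sum_congr rfl fun z _ => ?_
        rw [hU (y₁, y₂) z.2]
    _ = ∑ j : A × E, ∑ a' : A, ∑ x : m,
          conj' (Ua j.1 j.2 x₀) * M j.1 a' * Ua a' j.2 x * (u x y₁ * w y₂) := by
        refine Finset.sum_congr rfl fun j _ => Finset.sum_congr rfl fun a' _ => ?_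
        rw [Fintype.sum_prod_type]
        refine Finset.sum_congr rfl fun x _ => ?_
        simp [mul_ite, mul_one, mul_zero, Finset.sum_ite_eq]
    _ = (∑ t : (A × E) × A × m,
        conj' (Ua t.1.1 t.1.2 x₀) * M t.1.1 t.2.1 * Ua t.2.1 t.1.2 t.2.2 * u t.2.2 y₁) * w y₂ := by
        rw [Finset.sum_mul]
        calc ∑ j : A × E, ∑ a' : A, ∑ x : m,
              conj' (Ua j.1 j.2 x₀) * M j.1 a' * Ua a' j.2 x * (u x y₁ * w y₂)
            = ∑ j : A × E, ∑ p : A × m,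
              conj' (Ua j.1 j.2 x₀) * M j.1 p.1 * Ua p.1 j.2 p.2 * (u p.2 y₁ * w y₂) :=
              Finset.sum_congr rfl fun j _ => (Fintype.sum_prod_type
                (fun p : A × m => conj' (Ua j.1 j.2 x₀) * M j.1 p.1 * Ua p.1 j.2 p.2 *
                  (u p.2 y₁ * w y₂))).symm
          _ = ∑ t : (A × E) × A × m,
              conj' (Ua t.1.1 t.1.2 x₀) * M t.1.1 t.2.1 * Ua t.2.1 t.1.2 t.2.2 *
                (u t.2.2 y₁ * w y₂) :=
              (Fintype.sum_prod_type (fun t : (A × E) × A × m =>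
                conj' (Ua t.1.1 t.1.2 x₀) * M t.1.1 t.2.1 * Ua t.2.1 t.1.2 t.2.2 *
                  (u t.2.2 y₁ * w y₂))).symm
          _ = ∑ t : (A × E) × A × m,
              conj' (Ua t.1.1 t.1.2 x₀) * M t.1.1 t.2.1 * Ua t.2.1 t.1.2 t.2.2 * u t.2.2 y₁ *
                w y₂ := Finset.sum_congr rfl fun t _ => by ring
lemma opC_sub {A B C D : Type} [Fintype A] [Fintype B] [Fintype C] [Fintype D]
    (M N : Matrix C C ℂ) (f : A × B × C × D → ℂ) :
    opC (M - N) f = opC M f - opC N f := by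
  funext k; simp [opC, Matrix.sub_apply, sub_mul, Finset.sum_sub_distrib]
lemma opD_sub {A B C D : Type} [Fintype A] [Fintype B] [Fintype C] [Fintype D]
    (M N : Matrix D D ℂ) (f : A × B × C × D → ℂ) :
    opD (M - N) f = opD M f - opD N f := by
  funext k; simp [opD, Matrix.sub_apply, sub_mul, Finset.sum_sub_distrib]
lemma sum_conj_smul {σ : Type} [Fintype σ] (g : σ → ℂ) (c : ℂ)
    (hg : ∑ i, conj' (g i) * g i = 1) : ∑ i, conj' (g i) * (c * g i) = c := by
  rw [show (∑ i, conj' (g i) * (c * g i)) = c * ∑ i, conj' (g i) * g i from by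
    rw [Finset.mul_sum]; exact Finset.sum_congr rfl fun i _ => by ring, hg, mul_one]

end CoordAux


/-!
**Theorem 1 (quantum theory satisfies the Coordination Principle), canonical four-party
circuit of Fig. 1.**

Parties: `A, B, C, D`.  Sources are the 3-element subsets `ABC, ABD, ACD, BCD` of the
parties; transformations are the 2-element subsets `AB, AC, AD, BC, BD, CD`.  For each
source `S` and each 2-element subset `T ⊂ S` there is a finite-dimensional complex Hilbert
space `H_{S,T}` (modelled concretely as `ℂ^{iS_T}` for a finite index type `iS_T`), and for
each transformation `T` and party `X ∈ T` a space `K_{T,X}` (modelled as `ℂ^{kT_X}`).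
Tensor products of these spaces are modelled as spaces of `ℂ`-valued functions on the
product of the index types, with the standard inner product; tensor products of vectors,
unitaries and projectors are given entrywise by products of the entries of the factors,
which also realizes the canonical reordering of tensor factors.
-/

section

variable {iABC_AB iABC_AC iABC_BC iABD_AB iABD_AD iABD_BD
    iACD_AC iACD_AD iACD_CD iBCD_BC iBCD_BD iBCD_CD : Type}
variable [Fintype iABC_AB] [Fintype iABC_AC] [Fintype iABC_BC]
  [Fintype iABD_AB] [Fintype iABD_AD] [Fintype iABD_BD]
  [Fintype iACD_AC] [Fintype iACD_AD] [Fintype iACD_CD]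
  [Fintype iBCD_BC] [Fintype iBCD_BD] [Fintype iBCD_CD]
variable [DecidableEq iABC_AB] [DecidableEq iABC_AC] [DecidableEq iABC_BC]
  [DecidableEq iABD_AB] [DecidableEq iABD_AD] [DecidableEq iABD_BD]
  [DecidableEq iACD_AC] [DecidableEq iACD_AD] [DecidableEq iACD_CD]
  [DecidableEq iBCD_BC] [DecidableEq iBCD_BD] [DecidableEq iBCD_CD]
variable {kAB_A kAB_B kAC_A kAC_C kAD_A kAD_D kBC_B kBC_C kBD_B kBD_D kCD_C kCD_D : Type}
variable [Fintype kAB_A] [Fintype kAB_B] [Fintype kAC_A] [Fintype kAC_C]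
  [Fintype kAD_A] [Fintype kAD_D] [Fintype kBC_B] [Fintype kBC_C]
  [Fintype kBD_B] [Fintype kBD_D] [Fintype kCD_C] [Fintype kCD_D]
variable [DecidableEq kAB_A] [DecidableEq kAB_B] [DecidableEq kAC_A] [DecidableEq kAC_C]
  [DecidableEq kAD_A] [DecidableEq kAD_D] [DecidableEq kBC_B] [DecidableEq kBC_C]
  [DecidableEq kBD_B] [DecidableEq kBD_D] [DecidableEq kCD_C] [DecidableEq kCD_D]

/-- The probability `P(a,b,c,d) = ⟨ψ| U† (Π_A^a ⊗ Π_B^b ⊗ Π_C^c ⊗ Π_D^d) U |ψ⟩` of the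
canonical circuit, where `|ψ⟩` is the tensor product of the four source states and `U` the
tensor product of the six transformation unitaries. -/
noncomputable def circuitProb
    (ψABC : iABC_AB × iABC_AC × iABC_BC → ℂ)
    (ψABD : iABD_AB × iABD_AD × iABD_BD → ℂ)
    (ψACD : iACD_AC × iACD_AD × iACD_CD → ℂ)
    (ψBCD : iBCD_BC × iBCD_BD × iBCD_CD → ℂ)
    (UAB : Matrix (kAB_A × kAB_B) (iABC_AB × iABD_AB) ℂ)
    (UAC : Matrix (kAC_A × kAC_C) (iABC_AC × iACD_AC) ℂ)
    (UAD : Matrix (kAD_A × kAD_D) (iABD_AD × iACD_AD) ℂ)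
    (UBC : Matrix (kBC_B × kBC_C) (iABC_BC × iBCD_BC) ℂ)
    (UBD : Matrix (kBD_B × kBD_D) (iABD_BD × iBCD_BD) ℂ)
    (UCD : Matrix (kCD_C × kCD_D) (iACD_CD × iBCD_CD) ℂ)
    (PiA : Bool → Matrix (kAB_A × kAC_A × kAD_A) (kAB_A × kAC_A × kAD_A) ℂ)
    (PiB : Bool → Matrix (kAB_B × kBC_B × kBD_B) (kAB_B × kBC_B × kBD_B) ℂ)
    (PiC : Bool → Matrix (kAC_C × kBC_C × kCD_C) (kAC_C × kBC_C × kCD_C) ℂ)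
    (PiD : Bool → Matrix (kAD_D × kBD_D × kCD_D) (kAD_D × kBD_D × kCD_D) ℂ)
    (a b c d : Bool) : ℂ :=
  -- the global source state |ψ⟩ = ψ_ABC ⊗ ψ_ABD ⊗ ψ_ACD ⊗ ψ_BCD
  let Ψ : (iABC_AB × iABC_AC × iABC_BC) × (iABD_AB × iABD_AD × iABD_BD) ×
      (iACD_AC × iACD_AD × iACD_CD) × (iBCD_BC × iBCD_BD × iBCD_CD) → ℂ :=
    fun x => ψABC x.1 * ψABD x.2.1 * ψACD x.2.2.1 * ψBCD x.2.2.2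
  -- the global unitary U = U_AB ⊗ U_AC ⊗ U_AD ⊗ U_BC ⊗ U_BD ⊗ U_CD (with reordering)
  let U : Matrix
      ((kAB_A × kAB_B) × (kAC_A × kAC_C) × (kAD_A × kAD_D) ×
        (kBC_B × kBC_C) × (kBD_B × kBD_D) × (kCD_C × kCD_D))
      ((iABC_AB × iABC_AC × iABC_BC) × (iABD_AB × iABD_AD × iABD_BD) ×
        (iACD_AC × iACD_AD × iACD_CD) × (iBCD_BC × iBCD_BD × iBCD_CD)) ℂ :=
    fun k x =>
      UAB k.1 (x.1.1, x.2.1.1) *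
      UAC k.2.1 (x.1.2.1, x.2.2.1.1) *
      UAD k.2.2.1 (x.2.1.2.1, x.2.2.1.2.1) *
      UBC k.2.2.2.1 (x.1.2.2, x.2.2.2.1) *
      UBD k.2.2.2.2.1 (x.2.1.2.2, x.2.2.2.2.1) *
      UCD k.2.2.2.2.2 (x.2.2.1.2.2, x.2.2.2.2.2)
  -- the global projector Π_A^a ⊗ Π_B^b ⊗ Π_C^c ⊗ Π_D^d (with reordering)
  let Pr : Matrix
      ((kAB_A × kAB_B) × (kAC_A × kAC_C) × (kAD_A × kAD_D) ×
        (kBC_B × kBC_C) × (kBD_B × kBD_D) × (kCD_C × kCD_D))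
      ((kAB_A × kAB_B) × (kAC_A × kAC_C) × (kAD_A × kAD_D) ×
        (kBC_B × kBC_C) × (kBD_B × kBD_D) × (kCD_C × kCD_D)) ℂ :=
    fun k k' =>
      PiA a (k.1.1, k.2.1.1, k.2.2.1.1) (k'.1.1, k'.2.1.1, k'.2.2.1.1) *
      PiB b (k.1.2, k.2.2.2.1.1, k.2.2.2.2.1.1) (k'.1.2, k'.2.2.2.1.1, k'.2.2.2.2.1.1) *
      PiC c (k.2.1.2, k.2.2.2.1.2, k.2.2.2.2.2.1) (k'.2.1.2, k'.2.2.2.1.2, k'.2.2.2.2.2.1) *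
      PiD d (k.2.2.1.2, k.2.2.2.2.1.2, k.2.2.2.2.2.2) (k'.2.2.1.2, k'.2.2.2.2.1.2, k'.2.2.2.2.2.2)
  star Ψ ⬝ᵥ (Uᴴ * Pr * U) *ᵥ Ψ


open CoordAux
local notation "conj'" => starRingEnd ℂ

/-- The global source state as a vector over the source index types. -/
noncomputable def srcVec
    (ψABC : iABC_AB × iABC_AC × iABC_BC → ℂ)
    (ψABD : iABD_AB × iABD_AD × iABD_BD → ℂ)
    (ψACD : iACD_AC × iACD_AD × iACD_CD → ℂ)
    (ψBCD : iBCD_BC × iBCD_BD × iBCD_CD → ℂ) :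
    (iABC_AB × iABC_AC × iABC_BC) × (iABD_AB × iABD_AD × iABD_BD) ×
      (iACD_AC × iACD_AD × iACD_CD) × (iBCD_BC × iBCD_BD × iBCD_CD) → ℂ :=
  fun x => ψABC x.1 * ψABD x.2.1 * ψACD x.2.2.1 * ψBCD x.2.2.2

/-- The global unitary, with output indices regrouped by party. -/
noncomputable def bigW
    (UAB : Matrix (kAB_A × kAB_B) (iABC_AB × iABD_AB) ℂ)
    (UAC : Matrix (kAC_A × kAC_C) (iABC_AC × iACD_AC) ℂ)
    (UAD : Matrix (kAD_A × kAD_D) (iABD_AD × iACD_AD) ℂ)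
    (UBC : Matrix (kBC_B × kBC_C) (iABC_BC × iBCD_BC) ℂ)
    (UBD : Matrix (kBD_B × kBD_D) (iABD_BD × iBCD_BD) ℂ)
    (UCD : Matrix (kCD_C × kCD_D) (iACD_CD × iBCD_CD) ℂ) :
    ((kAB_A × kAC_A × kAD_A) × (kAB_B × kBC_B × kBD_B) × (kAC_C × kBC_C × kCD_C) ×
      (kAD_D × kBD_D × kCD_D)) →
    ((iABC_AB × iABC_AC × iABC_BC) × (iABD_AB × iABD_AD × iABD_BD) ×
      (iACD_AC × iACD_AD × iACD_CD) × (iBCD_BC × iBCD_BD × iBCD_CD)) → ℂ :=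
  fun k x =>
    UAB (k.1.1, k.2.1.1) (x.1.1, x.2.1.1) *
    UAC (k.1.2.1, k.2.2.1.1) (x.1.2.1, x.2.2.1.1) *
    UAD (k.1.2.2, k.2.2.2.1) (x.2.1.2.1, x.2.2.1.2.1) *
    UBC (k.2.1.2.1, k.2.2.1.2.1) (x.1.2.2, x.2.2.2.1) *
    UBD (k.2.1.2.2, k.2.2.2.2.1) (x.2.1.2.2, x.2.2.2.2.1) *
    UCD (k.2.2.1.2.2, k.2.2.2.2.2) (x.2.2.1.2.2, x.2.2.2.2.2)

/-- The output state of the circuit (global unitary applied to the source state). -/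
noncomputable def outVec
    (ψABC : iABC_AB × iABC_AC × iABC_BC → ℂ)
    (ψABD : iABD_AB × iABD_AD × iABD_BD → ℂ)
    (ψACD : iACD_AC × iACD_AD × iACD_CD → ℂ)
    (ψBCD : iBCD_BC × iBCD_BD × iBCD_CD → ℂ)
    (UAB : Matrix (kAB_A × kAB_B) (iABC_AB × iABD_AB) ℂ)
    (UAC : Matrix (kAC_A × kAC_C) (iABC_AC × iACD_AC) ℂ)
    (UAD : Matrix (kAD_A × kAD_D) (iABD_AD × iACD_AD) ℂ)
    (UBC : Matrix (kBC_B × kBC_C) (iABC_BC × iBCD_BC) ℂ)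
    (UBD : Matrix (kBD_B × kBD_D) (iABD_BD × iBCD_BD) ℂ)
    (UCD : Matrix (kCD_C × kCD_D) (iACD_CD × iBCD_CD) ℂ) :
    ((kAB_A × kAC_A × kAD_A) × (kAB_B × kBC_B × kBD_B) × (kAC_C × kBC_C × kCD_C) ×
      (kAD_D × kBD_D × kCD_D)) → ℂ :=
  fun k => ∑ x, bigW UAB UAC UAD UBC UBD UCD k x * srcVec ψABC ψABD ψACD ψBCD x



/-- Regrouping of the twelve output factors: by party vs by transformation. -/
def regroupK :
    ((kAB_A × kAC_A × kAD_A) × (kAB_B × kBC_B × kBD_B) × (kAC_C × kBC_C × kCD_C) ×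
      (kAD_D × kBD_D × kCD_D)) ≃
    ((kAB_A × kAB_B) × (kAC_A × kAC_C) × (kAD_A × kAD_D) × (kBC_B × kBC_C) ×
      (kBD_B × kBD_D) × (kCD_C × kCD_D)) :=
  ⟨fun j => ((j.1.1, j.2.1.1), (j.1.2.1, j.2.2.1.1), (j.1.2.2, j.2.2.2.1),
      (j.2.1.2.1, j.2.2.1.2.1), (j.2.1.2.2, j.2.2.2.2.1), (j.2.2.1.2.2, j.2.2.2.2.2)),
    fun k => ((k.1.1, k.2.1.1, k.2.2.1.1), (k.1.2, k.2.2.2.1.1, k.2.2.2.2.1.1),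
      (k.2.1.2, k.2.2.2.1.2, k.2.2.2.2.2.1), (k.2.2.1.2, k.2.2.2.2.1.2, k.2.2.2.2.2.2)),
    fun j => rfl, fun k => rfl⟩

open CoordAux in
/-- Bridge: `circuitProb` in terms of the output state and slot operators. -/
lemma circuitProb_eq_ip
    (ψABC : iABC_AB × iABC_AC × iABC_BC → ℂ)
    (ψABD : iABD_AB × iABD_AD × iABD_BD → ℂ)
    (ψACD : iACD_AC × iACD_AD × iACD_CD → ℂ)
    (ψBCD : iBCD_BC × iBCD_BD × iBCD_CD → ℂ)
    (UAB : Matrix (kAB_A × kAB_B) (iABC_AB × iABD_AB) ℂ)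
    (UAC : Matrix (kAC_A × kAC_C) (iABC_AC × iACD_AC) ℂ)
    (UAD : Matrix (kAD_A × kAD_D) (iABD_AD × iACD_AD) ℂ)
    (UBC : Matrix (kBC_B × kBC_C) (iABC_BC × iBCD_BC) ℂ)
    (UBD : Matrix (kBD_B × kBD_D) (iABD_BD × iBCD_BD) ℂ)
    (UCD : Matrix (kCD_C × kCD_D) (iACD_CD × iBCD_CD) ℂ)
    (PiA : Bool → Matrix (kAB_A × kAC_A × kAD_A) (kAB_A × kAC_A × kAD_A) ℂ)
    (PiB : Bool → Matrix (kAB_B × kBC_B × kBD_B) (kAB_B × kBC_B × kBD_B) ℂ)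
    (PiC : Bool → Matrix (kAC_C × kBC_C × kCD_C) (kAC_C × kBC_C × kCD_C) ℂ)
    (PiD : Bool → Matrix (kAD_D × kBD_D × kCD_D) (kAD_D × kBD_D × kCD_D) ℂ)
    (a b c d : Bool) :
    circuitProb ψABC ψABD ψACD ψBCD UAB UAC UAD UBC UBD UCD PiA PiB PiC PiD a b c d
      = ip (outVec ψABC ψABD ψACD ψBCD UAB UAC UAD UBC UBD UCD)
          (opA (PiA a) (opB (PiB b) (opC (PiC c)
            (opD (PiD d) (outVec ψABC ψABD ψACD ψBCD UAB UAC UAD UBC UBD UCD))))) := by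
  classical
  rw [circuitProb]; refine (CoordAux.quad_form _ _ _).trans ?_
  simp only [ip]
  have hinner : ∀ j : (kAB_A × kAC_A × kAD_A) × (kAB_B × kBC_B × kBD_B) ×
      (kAC_C × kBC_C × kCD_C) × (kAD_D × kBD_D × kCD_D),
      (opA (PiA a) (opB (PiB b) (opC (PiC c)
        (opD (PiD d) (outVec ψABC ψABD ψACD ψBCD UAB UAC UAD UBC UBD UCD))))) j
      = ∑ j', (PiA a j.1 j'.1 * PiB b j.2.1 j'.2.1 * PiC c j.2.2.1 j'.2.2.1 *
          PiD d j.2.2.2 j'.2.2.2) *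
          outVec ψABC ψABD ψACD ψBCD UAB UAC UAD UBC UBD UCD j' :=
    fun j => CoordAux.op_all _ _ _ _ _ j
  simp only [hinner]
  symm
  refine Fintype.sum_equiv regroupK _ _ (fun j => ?_)
  rw [Finset.mul_sum]
  refine Fintype.sum_equiv regroupK _ _ (fun j' => ?_)
  simp only [regroupK, Equiv.coe_fn_mk, outVec, bigW, srcVec, Matrix.mulVec, dotProduct, Prod.mk.eta]
  ring


/-! ### Party A: structure of `U† (M_A ⊗ 1) U |ψ⟩` -/

/-- Active part of the global unitary for party `A`. -/
def partyA_Ua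
    (UAB : Matrix (kAB_A × kAB_B) (iABC_AB × iABD_AB) ℂ)
    (UAC : Matrix (kAC_A × kAC_C) (iABC_AC × iACD_AC) ℂ)
    (UAD : Matrix (kAD_A × kAD_D) (iABD_AD × iACD_AD) ℂ) :
    (kAB_A × kAC_A × kAD_A) → (kAB_B × kAC_C × kAD_D) →
    ((iABC_AB × iABD_AB) × (iABC_AC × iACD_AC) × (iABD_AD × iACD_AD)) → ℂ :=
  fun α e zm => UAB (α.1, e.1) zm.1 * UAC (α.2.1, e.2.1) zm.2.1 * UAD (α.2.2, e.2.2) zm.2.2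

/-- Passive part of the global unitary for party `A`. -/
def partyA_Up
    (UBC : Matrix (kBC_B × kBC_C) (iABC_BC × iBCD_BC) ℂ)
    (UBD : Matrix (kBD_B × kBD_D) (iABD_BD × iBCD_BD) ℂ)
    (UCD : Matrix (kCD_C × kCD_D) (iACD_CD × iBCD_CD) ℂ) :
    ((kBC_B × kBC_C) × (kBD_B × kBD_D) × (kCD_C × kCD_D)) →
    (iABC_BC × iABD_BD × iACD_CD) → (iBCD_BC × iBCD_BD × iBCD_CD) → ℂ :=
  fun f y1 y2 => UBC f.1 (y1.1, y2.1) * UBD f.2.1 (y1.2.1, y2.2.1) * UCD f.2.2 (y1.2.2, y2.2.2)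

/-- Source-state contraction for party `A`. -/
def partyA_u
    (ψABC : iABC_AB × iABC_AC × iABC_BC → ℂ)
    (ψABD : iABD_AB × iABD_AD × iABD_BD → ℂ)
    (ψACD : iACD_AC × iACD_AD × iACD_CD → ℂ) :
    ((iABC_AB × iABD_AB) × (iABC_AC × iACD_AC) × (iABD_AD × iACD_AD)) →
    (iABC_BC × iABD_BD × iACD_CD) → ℂ :=
  fun zm y1 => ψABC (zm.1.1, zm.2.1.1, y1.1) * ψABD (zm.1.2, zm.2.2.1, y1.2.1) *
    ψACD (zm.2.1.2, zm.2.2.2, y1.2.2)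

def partyA_eqvK :
    (((kAB_A × kAC_A × kAD_A) × (kAB_B × kAC_C × kAD_D)) ×
      ((kBC_B × kBC_C) × (kBD_B × kBD_D) × (kCD_C × kCD_D))) ≃
    ((kAB_A × kAC_A × kAD_A) × (kAB_B × kBC_B × kBD_B) × (kAC_C × kBC_C × kCD_C) ×
      (kAD_D × kBD_D × kCD_D)) :=
  ⟨fun j => (j.1.1, (j.1.2.1, j.2.1.1, j.2.2.1.1), (j.1.2.2.1, j.2.1.2, j.2.2.2.1),
      (j.1.2.2.2, j.2.2.1.2, j.2.2.2.2)),
    fun k => ((k.1, (k.2.1.1, k.2.2.1.1, k.2.2.2.1)),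
      ((k.2.1.2.1, k.2.2.1.2.1), (k.2.1.2.2, k.2.2.2.2.1), (k.2.2.1.2.2, k.2.2.2.2.2))),
    fun j => rfl, fun k => rfl⟩

def partyA_eqvI :
    ((((iABC_AB × iABD_AB) × (iABC_AC × iACD_AC) × (iABD_AD × iACD_AD))) ×
      ((iABC_BC × iABD_BD × iACD_CD) × (iBCD_BC × iBCD_BD × iBCD_CD))) ≃
    ((iABC_AB × iABC_AC × iABC_BC) × (iABD_AB × iABD_AD × iABD_BD) ×
      (iACD_AC × iACD_AD × iACD_CD) × (iBCD_BC × iBCD_BD × iBCD_CD)) :=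
  ⟨fun z => ((z.1.1.1, z.1.2.1.1, z.2.1.1), (z.1.1.2, z.1.2.2.1, z.2.1.2.1),
      (z.1.2.1.2, z.1.2.2.2, z.2.1.2.2), z.2.2),
    fun x => (((x.1.1, x.2.1.1), (x.1.2.1, x.2.2.1.1), (x.2.1.2.1, x.2.2.1.2.1)),
      ((x.1.2.2, x.2.1.2.2, x.2.2.1.2.2), x.2.2.2)),
    fun z => rfl, fun x => rfl⟩

open CoordAux in
lemma factA
    (ψABC : iABC_AB × iABC_AC × iABC_BC → ℂ)
    (ψABD : iABD_AB × iABD_AD × iABD_BD → ℂ)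
    (ψACD : iACD_AC × iACD_AD × iACD_CD → ℂ)
    (ψBCD : iBCD_BC × iBCD_BD × iBCD_CD → ℂ)
    (UAB : Matrix (kAB_A × kAB_B) (iABC_AB × iABD_AB) ℂ)
    (UAC : Matrix (kAC_A × kAC_C) (iABC_AC × iACD_AC) ℂ)
    (UAD : Matrix (kAD_A × kAD_D) (iABD_AD × iACD_AD) ℂ)
    (UBC : Matrix (kBC_B × kBC_C) (iABC_BC × iBCD_BC) ℂ)
    (UBD : Matrix (kBD_B × kBD_D) (iABD_BD × iBCD_BD) ℂ)
    (UCD : Matrix (kCD_C × kCD_D) (iACD_CD × iBCD_CD) ℂ)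
    (hBC : UBCᴴ * UBC = 1) (hBD : UBDᴴ * UBD = 1) (hCD : UCDᴴ * UCD = 1)
    (M : Matrix (kAB_A × kAC_A × kAD_A) (kAB_A × kAC_A × kAD_A) ℂ) :
    ∃ v : (iABC_AB × iABC_AC × iABC_BC) → (iABD_AB × iABD_AD × iABD_BD) →
        (iACD_AC × iACD_AD × iACD_CD) → ℂ,
      ∀ p q r s,
      (∑ k, conj' (bigW UAB UAC UAD UBC UBD UCD k (p, q, r, s)) *
        opA M (outVec ψABC ψABD ψACD ψBCD UAB UAC UAD UBC UBD UCD) k)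
      = v p q r * ψBCD s := by
  have hU : ∀ (y y' : (iABC_BC × iABD_BD × iACD_CD) × (iBCD_BC × iBCD_BD × iBCD_CD)),
      (∑ f, conj' (partyA_Up UBC UBD UCD f y.1 y.2) * partyA_Up UBC UBD UCD f y'.1 y'.2)
        = if y = y' then 1 else 0 := by
    intro y y'
    have := tensor3_iso UBC UBD UCD hBC hBD hCD
      (y.1.1, y.2.1) (y'.1.1, y'.2.1) (y.1.2.1, y.2.2.1) (y'.1.2.1, y'.2.2.1)
      (y.1.2.2, y.2.2.2) (y'.1.2.2, y'.2.2.2)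
    rw [show (∑ f, conj' (partyA_Up UBC UBD UCD f y.1 y.2) * partyA_Up UBC UBD UCD f y'.1 y'.2)
        = ∑ f : (kBC_B × kBC_C) × (kBD_B × kBD_D) × (kCD_C × kCD_D),
          conj' (UBC f.1 (y.1.1, y.2.1) * UBD f.2.1 (y.1.2.1, y.2.2.1) *
            UCD f.2.2 (y.1.2.2, y.2.2.2)) *
          (UBC f.1 (y'.1.1, y'.2.1) * UBD f.2.1 (y'.1.2.1, y'.2.2.1) *
            UCD f.2.2 (y'.1.2.2, y'.2.2.2))
      from Finset.sum_congr rfl fun f _ => by simp only [partyA_Up], this]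
    refine if_congr ?_ rfl rfl
    constructor
    · rintro ⟨h1, h2, h3⟩
      rw [Prod.ext_iff] at h1 h2 h3
      obtain ⟨y1, y2⟩ := y; obtain ⟨y1', y2'⟩ := y'
      obtain ⟨a1, a2, a3⟩ := y1; obtain ⟨b1, b2, b3⟩ := y2
      obtain ⟨a1', a2', a3'⟩ := y1'; obtain ⟨b1', b2', b3'⟩ := y2'
      simp_all
    · rintro rfl; exact ⟨rfl, rfl, rfl⟩
  refine ⟨fun p q r =>
    ∑ t : ((kAB_A × kAC_A × kAD_A) × (kAB_B × kAC_C × kAD_D)) ×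
        ((kAB_A × kAC_A × kAD_A) ×
          ((iABC_AB × iABD_AB) × (iABC_AC × iACD_AC) × (iABD_AD × iACD_AD))),
      conj' (partyA_Ua UAB UAC UAD t.1.1 t.1.2 ((p.1, q.1), (p.2.1, r.1), (q.2.1, r.2.1))) *
        M t.1.1 t.2.1 * partyA_Ua UAB UAC UAD t.2.1 t.1.2 t.2.2 *
        partyA_u ψABC ψABD ψACD t.2.2 (p.2.2, q.2.2, r.2.2), fun p q r s => ?_⟩
  have hout : ∀ (e : kAB_B × kAC_C × kAD_D)
      (f : (kBC_B × kBC_C) × (kBD_B × kBD_D) × (kCD_C × kCD_D))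
      (a' : kAB_A × kAC_A × kAD_A),
      outVec ψABC ψABD ψACD ψBCD UAB UAC UAD UBC UBD UCD (partyA_eqvK ((a', e), f))
        = ∑ z : ((iABC_AB × iABD_AB) × (iABC_AC × iACD_AC) × (iABD_AD × iACD_AD)) ×
            ((iABC_BC × iABD_BD × iACD_CD) × (iBCD_BC × iBCD_BD × iBCD_CD)),
          partyA_Ua UAB UAC UAD a' e z.1 * partyA_Up UBC UBD UCD f z.2.1 z.2.2 *
            (partyA_u ψABC ψABD ψACD z.1 z.2.1 * ψBCD z.2.2) := by
    intro e f a'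
    simp only [outVec]
    refine (Fintype.sum_equiv partyA_eqvI _ _ (fun z => ?_)).symm
    simp only [partyA_eqvI, partyA_eqvK, Equiv.coe_fn_mk, bigW, srcVec, partyA_Ua, partyA_Up,
      partyA_u, Prod.mk.eta]
    ring
  calc (∑ k, conj' (bigW UAB UAC UAD UBC UBD UCD k (p, q, r, s)) *
        opA M (outVec ψABC ψABD ψACD ψBCD UAB UAC UAD UBC UBD UCD) k)
      = ∑ j : ((kAB_A × kAC_A × kAD_A) × (kAB_B × kAC_C × kAD_D)) ×
          ((kBC_B × kBC_C) × (kBD_B × kBD_D) × (kCD_C × kCD_D)),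
        conj' (partyA_Ua UAB UAC UAD j.1.1 j.1.2 ((p.1, q.1), (p.2.1, r.1), (q.2.1, r.2.1))) *
          conj' (partyA_Up UBC UBD UCD j.2 (p.2.2, q.2.2, r.2.2) s) *
          (∑ a' : kAB_A × kAC_A × kAD_A, M j.1.1 a' *
            (∑ z : ((iABC_AB × iABD_AB) × (iABC_AC × iACD_AC) × (iABD_AD × iACD_AD)) ×
                ((iABC_BC × iABD_BD × iACD_CD) × (iBCD_BC × iBCD_BD × iBCD_CD)),
              partyA_Ua UAB UAC UAD a' j.1.2 z.1 * partyA_Up UBC UBD UCD j.2 z.2.1 z.2.2 *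
                (partyA_u ψABC ψABD ψACD z.1 z.2.1 * ψBCD z.2.2))) := by
        refine (Fintype.sum_equiv partyA_eqvK _ _ (fun j => ?_)).symm
        rw [show ∀ X, opA M (outVec ψABC ψABD ψACD ψBCD UAB UAC UAD UBC UBD UCD)
            (partyA_eqvK ((X, j.1.2), j.2))
            = ∑ a' : kAB_A × kAC_A × kAD_A, M X a' *
              (∑ z : ((iABC_AB × iABD_AB) × (iABC_AC × iACD_AC) × (iABD_AD × iACD_AD)) ×
                  ((iABC_BC × iABD_BD × iACD_CD) × (iBCD_BC × iBCD_BD × iBCD_CD)),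
                partyA_Ua UAB UAC UAD a' j.1.2 z.1 * partyA_Up UBC UBD UCD j.2 z.2.1 z.2.2 *
                  (partyA_u ψABC ψABD ψACD z.1 z.2.1 * ψBCD z.2.2))
          from fun X => Finset.sum_congr rfl fun a' _ =>
            congrArg (M X a' * ·) (hout j.1.2 j.2 a')]
        simp only [partyA_eqvK, Equiv.coe_fn_mk, bigW, partyA_Ua, partyA_Up, map_mul,
          Prod.mk.eta]
        ring
    _ = _ :=
      key (partyA_Ua UAB UAC UAD) (partyA_Up UBC UBD UCD) hU M (partyA_u ψABC ψABD ψACD)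
        ψBCD ((p.1, q.1), (p.2.1, r.1), (q.2.1, r.2.1)) (p.2.2, q.2.2, r.2.2) s


/-! ### Party B -/

def partyB_Ua
    (UAB : Matrix (kAB_A × kAB_B) (iABC_AB × iABD_AB) ℂ)
    (UBC : Matrix (kBC_B × kBC_C) (iABC_BC × iBCD_BC) ℂ)
    (UBD : Matrix (kBD_B × kBD_D) (iABD_BD × iBCD_BD) ℂ) :
    (kAB_B × kBC_B × kBD_B) → (kAB_A × kBC_C × kBD_D) →
    ((iABC_AB × iABD_AB) × (iABC_BC × iBCD_BC) × (iABD_BD × iBCD_BD)) → ℂ :=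
  fun β e zm => UAB (e.1, β.1) zm.1 * UBC (β.2.1, e.2.1) zm.2.1 * UBD (β.2.2, e.2.2) zm.2.2

def partyB_Up
    (UAC : Matrix (kAC_A × kAC_C) (iABC_AC × iACD_AC) ℂ)
    (UAD : Matrix (kAD_A × kAD_D) (iABD_AD × iACD_AD) ℂ)
    (UCD : Matrix (kCD_C × kCD_D) (iACD_CD × iBCD_CD) ℂ) :
    ((kAC_A × kAC_C) × (kAD_A × kAD_D) × (kCD_C × kCD_D)) →
    (iABC_AC × iABD_AD × iBCD_CD) → (iACD_AC × iACD_AD × iACD_CD) → ℂ :=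
  fun f y1 y2 => UAC f.1 (y1.1, y2.1) * UAD f.2.1 (y1.2.1, y2.2.1) * UCD f.2.2 (y2.2.2, y1.2.2)

def partyB_u
    (ψABC : iABC_AB × iABC_AC × iABC_BC → ℂ)
    (ψABD : iABD_AB × iABD_AD × iABD_BD → ℂ)
    (ψBCD : iBCD_BC × iBCD_BD × iBCD_CD → ℂ) :
    ((iABC_AB × iABD_AB) × (iABC_BC × iBCD_BC) × (iABD_BD × iBCD_BD)) →
    (iABC_AC × iABD_AD × iBCD_CD) → ℂ :=
  fun zm y1 => ψABC (zm.1.1, y1.1, zm.2.1.1) * ψABD (zm.1.2, y1.2.1, zm.2.2.1) *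
    ψBCD (zm.2.1.2, zm.2.2.2, y1.2.2)

def partyB_eqvK :
    (((kAB_B × kBC_B × kBD_B) × (kAB_A × kBC_C × kBD_D)) ×
      ((kAC_A × kAC_C) × (kAD_A × kAD_D) × (kCD_C × kCD_D))) ≃
    ((kAB_A × kAC_A × kAD_A) × (kAB_B × kBC_B × kBD_B) × (kAC_C × kBC_C × kCD_C) ×
      (kAD_D × kBD_D × kCD_D)) :=
  ⟨fun j => ((j.1.2.1, j.2.1.1, j.2.2.1.1), j.1.1, (j.2.1.2, j.1.2.2.1, j.2.2.2.1),
      (j.2.2.1.2, j.1.2.2.2, j.2.2.2.2)),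
    fun k => ((k.2.1, (k.1.1, k.2.2.1.2.1, k.2.2.2.2.1)),
      ((k.1.2.1, k.2.2.1.1), (k.1.2.2, k.2.2.2.1), (k.2.2.1.2.2, k.2.2.2.2.2))),
    fun j => rfl, fun k => rfl⟩

def partyB_eqvI :
    ((((iABC_AB × iABD_AB) × (iABC_BC × iBCD_BC) × (iABD_BD × iBCD_BD))) ×
      ((iABC_AC × iABD_AD × iBCD_CD) × (iACD_AC × iACD_AD × iACD_CD))) ≃
    ((iABC_AB × iABC_AC × iABC_BC) × (iABD_AB × iABD_AD × iABD_BD) ×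
      (iACD_AC × iACD_AD × iACD_CD) × (iBCD_BC × iBCD_BD × iBCD_CD)) :=
  ⟨fun z => ((z.1.1.1, z.2.1.1, z.1.2.1.1), (z.1.1.2, z.2.1.2.1, z.1.2.2.1), z.2.2,
      (z.1.2.1.2, z.1.2.2.2, z.2.1.2.2)),
    fun x => (((x.1.1, x.2.1.1), (x.1.2.2, x.2.2.2.1), (x.2.1.2.2, x.2.2.2.2.1)),
      ((x.1.2.1, x.2.1.2.1, x.2.2.2.2.2), x.2.2.1)),
    fun z => rfl, fun x => rfl⟩

open CoordAux in
lemma factB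
    (ψABC : iABC_AB × iABC_AC × iABC_BC → ℂ)
    (ψABD : iABD_AB × iABD_AD × iABD_BD → ℂ)
    (ψACD : iACD_AC × iACD_AD × iACD_CD → ℂ)
    (ψBCD : iBCD_BC × iBCD_BD × iBCD_CD → ℂ)
    (UAB : Matrix (kAB_A × kAB_B) (iABC_AB × iABD_AB) ℂ)
    (UAC : Matrix (kAC_A × kAC_C) (iABC_AC × iACD_AC) ℂ)
    (UAD : Matrix (kAD_A × kAD_D) (iABD_AD × iACD_AD) ℂ)
    (UBC : Matrix (kBC_B × kBC_C) (iABC_BC × iBCD_BC) ℂ)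
    (UBD : Matrix (kBD_B × kBD_D) (iABD_BD × iBCD_BD) ℂ)
    (UCD : Matrix (kCD_C × kCD_D) (iACD_CD × iBCD_CD) ℂ)
    (hAC : UACᴴ * UAC = 1) (hAD : UADᴴ * UAD = 1) (hCD : UCDᴴ * UCD = 1)
    (M : Matrix (kAB_B × kBC_B × kBD_B) (kAB_B × kBC_B × kBD_B) ℂ) :
    ∃ v : (iABC_AB × iABC_AC × iABC_BC) → (iABD_AB × iABD_AD × iABD_BD) →
        (iBCD_BC × iBCD_BD × iBCD_CD) → ℂ,
      ∀ p q r s,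
      (∑ k, conj' (bigW UAB UAC UAD UBC UBD UCD k (p, q, r, s)) *
        opB M (outVec ψABC ψABD ψACD ψBCD UAB UAC UAD UBC UBD UCD) k)
      = v p q s * ψACD r := by
  have hU : ∀ (y y' : (iABC_AC × iABD_AD × iBCD_CD) × (iACD_AC × iACD_AD × iACD_CD)),
      (∑ f, conj' (partyB_Up UAC UAD UCD f y.1 y.2) * partyB_Up UAC UAD UCD f y'.1 y'.2)
        = if y = y' then 1 else 0 := by
    intro y y'
    have := tensor3_iso UAC UAD UCD hAC hAD hCD
      (y.1.1, y.2.1) (y'.1.1, y'.2.1) (y.1.2.1, y.2.2.1) (y'.1.2.1, y'.2.2.1)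
      (y.2.2.2, y.1.2.2) (y'.2.2.2, y'.1.2.2)
    rw [show (∑ f, conj' (partyB_Up UAC UAD UCD f y.1 y.2) * partyB_Up UAC UAD UCD f y'.1 y'.2)
        = ∑ f : (kAC_A × kAC_C) × (kAD_A × kAD_D) × (kCD_C × kCD_D),
          conj' (UAC f.1 (y.1.1, y.2.1) * UAD f.2.1 (y.1.2.1, y.2.2.1) *
            UCD f.2.2 (y.2.2.2, y.1.2.2)) *
          (UAC f.1 (y'.1.1, y'.2.1) * UAD f.2.1 (y'.1.2.1, y'.2.2.1) *
            UCD f.2.2 (y'.2.2.2, y'.1.2.2))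
      from Finset.sum_congr rfl fun f _ => by simp only [partyB_Up], this]
    refine if_congr ?_ rfl rfl
    constructor
    · rintro ⟨h1, h2, h3⟩
      rw [Prod.ext_iff] at h1 h2 h3
      obtain ⟨y1, y2⟩ := y; obtain ⟨y1', y2'⟩ := y'
      obtain ⟨a1, a2, a3⟩ := y1; obtain ⟨b1, b2, b3⟩ := y2
      obtain ⟨a1', a2', a3'⟩ := y1'; obtain ⟨b1', b2', b3'⟩ := y2'
      simp_all
    · rintro rfl; exact ⟨rfl, rfl, rfl⟩
  refine ⟨fun p q s =>
    ∑ t : ((kAB_B × kBC_B × kBD_B) × (kAB_A × kBC_C × kBD_D)) ×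
        ((kAB_B × kBC_B × kBD_B) ×
          ((iABC_AB × iABD_AB) × (iABC_BC × iBCD_BC) × (iABD_BD × iBCD_BD))),
      conj' (partyB_Ua UAB UBC UBD t.1.1 t.1.2 ((p.1, q.1), (p.2.2, s.1), (q.2.2, s.2.1))) *
        M t.1.1 t.2.1 * partyB_Ua UAB UBC UBD t.2.1 t.1.2 t.2.2 *
        partyB_u ψABC ψABD ψBCD t.2.2 (p.2.1, q.2.1, s.2.2), fun p q r s => ?_⟩
  have hout : ∀ (e : kAB_A × kBC_C × kBD_D)
      (f : (kAC_A × kAC_C) × (kAD_A × kAD_D) × (kCD_C × kCD_D))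
      (a' : kAB_B × kBC_B × kBD_B),
      outVec ψABC ψABD ψACD ψBCD UAB UAC UAD UBC UBD UCD (partyB_eqvK ((a', e), f))
        = ∑ z : ((iABC_AB × iABD_AB) × (iABC_BC × iBCD_BC) × (iABD_BD × iBCD_BD)) ×
            ((iABC_AC × iABD_AD × iBCD_CD) × (iACD_AC × iACD_AD × iACD_CD)),
          partyB_Ua UAB UBC UBD a' e z.1 * partyB_Up UAC UAD UCD f z.2.1 z.2.2 *
            (partyB_u ψABC ψABD ψBCD z.1 z.2.1 * ψACD z.2.2) := by
    intro e f a'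
    simp only [outVec]
    refine (Fintype.sum_equiv partyB_eqvI _ _ (fun z => ?_)).symm
    simp only [partyB_eqvI, partyB_eqvK, Equiv.coe_fn_mk, bigW, srcVec, partyB_Ua, partyB_Up,
      partyB_u, Prod.mk.eta]
    ring
  calc (∑ k, conj' (bigW UAB UAC UAD UBC UBD UCD k (p, q, r, s)) *
        opB M (outVec ψABC ψABD ψACD ψBCD UAB UAC UAD UBC UBD UCD) k)
      = ∑ j : ((kAB_B × kBC_B × kBD_B) × (kAB_A × kBC_C × kBD_D)) ×
          ((kAC_A × kAC_C) × (kAD_A × kAD_D) × (kCD_C × kCD_D)),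
        conj' (partyB_Ua UAB UBC UBD j.1.1 j.1.2 ((p.1, q.1), (p.2.2, s.1), (q.2.2, s.2.1))) *
          conj' (partyB_Up UAC UAD UCD j.2 (p.2.1, q.2.1, s.2.2) r) *
          (∑ a' : kAB_B × kBC_B × kBD_B, M j.1.1 a' *
            (∑ z : ((iABC_AB × iABD_AB) × (iABC_BC × iBCD_BC) × (iABD_BD × iBCD_BD)) ×
                ((iABC_AC × iABD_AD × iBCD_CD) × (iACD_AC × iACD_AD × iACD_CD)),
              partyB_Ua UAB UBC UBD a' j.1.2 z.1 * partyB_Up UAC UAD UCD j.2 z.2.1 z.2.2 *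
                (partyB_u ψABC ψABD ψBCD z.1 z.2.1 * ψACD z.2.2))) := by
        refine (Fintype.sum_equiv partyB_eqvK _ _ (fun j => ?_)).symm
        rw [show ∀ X, opB M (outVec ψABC ψABD ψACD ψBCD UAB UAC UAD UBC UBD UCD)
            (partyB_eqvK ((X, j.1.2), j.2))
            = ∑ a' : kAB_B × kBC_B × kBD_B, M X a' *
              (∑ z : ((iABC_AB × iABD_AB) × (iABC_BC × iBCD_BC) × (iABD_BD × iBCD_BD)) ×
                  ((iABC_AC × iABD_AD × iBCD_CD) × (iACD_AC × iACD_AD × iACD_CD)),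
                partyB_Ua UAB UBC UBD a' j.1.2 z.1 * partyB_Up UAC UAD UCD j.2 z.2.1 z.2.2 *
                  (partyB_u ψABC ψABD ψBCD z.1 z.2.1 * ψACD z.2.2))
          from fun X => Finset.sum_congr rfl fun a' _ =>
            congrArg (M X a' * ·) (hout j.1.2 j.2 a')]
        simp only [partyB_eqvK, Equiv.coe_fn_mk, bigW, partyB_Ua, partyB_Up, map_mul,
          Prod.mk.eta]
        ring
    _ = _ :=
      key (partyB_Ua UAB UBC UBD) (partyB_Up UAC UAD UCD) hU M (partyB_u ψABC ψABD ψBCD)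
        ψACD ((p.1, q.1), (p.2.2, s.1), (q.2.2, s.2.1)) (p.2.1, q.2.1, s.2.2) r


/-! ### Party C -/

def partyC_Ua
    (UAC : Matrix (kAC_A × kAC_C) (iABC_AC × iACD_AC) ℂ)
    (UBC : Matrix (kBC_B × kBC_C) (iABC_BC × iBCD_BC) ℂ)
    (UCD : Matrix (kCD_C × kCD_D) (iACD_CD × iBCD_CD) ℂ) :
    (kAC_C × kBC_C × kCD_C) → (kAC_A × kBC_B × kCD_D) →
    ((iABC_AC × iACD_AC) × (iABC_BC × iBCD_BC) × (iACD_CD × iBCD_CD)) → ℂ :=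
  fun γ e zm => UAC (e.1, γ.1) zm.1 * UBC (e.2.1, γ.2.1) zm.2.1 * UCD (γ.2.2, e.2.2) zm.2.2

def partyC_Up
    (UAB : Matrix (kAB_A × kAB_B) (iABC_AB × iABD_AB) ℂ)
    (UAD : Matrix (kAD_A × kAD_D) (iABD_AD × iACD_AD) ℂ)
    (UBD : Matrix (kBD_B × kBD_D) (iABD_BD × iBCD_BD) ℂ) :
    ((kAB_A × kAB_B) × (kAD_A × kAD_D) × (kBD_B × kBD_D)) →
    (iABC_AB × iACD_AD × iBCD_BD) → (iABD_AB × iABD_AD × iABD_BD) → ℂ :=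
  fun f y1 y2 => UAB f.1 (y1.1, y2.1) * UAD f.2.1 (y2.2.1, y1.2.1) * UBD f.2.2 (y2.2.2, y1.2.2)

def partyC_u
    (ψABC : iABC_AB × iABC_AC × iABC_BC → ℂ)
    (ψACD : iACD_AC × iACD_AD × iACD_CD → ℂ)
    (ψBCD : iBCD_BC × iBCD_BD × iBCD_CD → ℂ) :
    ((iABC_AC × iACD_AC) × (iABC_BC × iBCD_BC) × (iACD_CD × iBCD_CD)) →
    (iABC_AB × iACD_AD × iBCD_BD) → ℂ :=
  fun zm y1 => ψABC (y1.1, zm.1.1, zm.2.1.1) * ψACD (zm.1.2, y1.2.1, zm.2.2.1) *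
    ψBCD (zm.2.1.2, y1.2.2, zm.2.2.2)

def partyC_eqvK :
    (((kAC_C × kBC_C × kCD_C) × (kAC_A × kBC_B × kCD_D)) ×
      ((kAB_A × kAB_B) × (kAD_A × kAD_D) × (kBD_B × kBD_D))) ≃
    ((kAB_A × kAC_A × kAD_A) × (kAB_B × kBC_B × kBD_B) × (kAC_C × kBC_C × kCD_C) ×
      (kAD_D × kBD_D × kCD_D)) :=
  ⟨fun j => ((j.2.1.1, j.1.2.1, j.2.2.1.1), (j.2.1.2, j.1.2.2.1, j.2.2.2.1), j.1.1,
      (j.2.2.1.2, j.2.2.2.2, j.1.2.2.2)),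
    fun k => ((k.2.2.1, (k.1.2.1, k.2.1.2.1, k.2.2.2.2.2)),
      ((k.1.1, k.2.1.1), (k.1.2.2, k.2.2.2.1), (k.2.1.2.2, k.2.2.2.2.1))),
    fun j => rfl, fun k => rfl⟩

def partyC_eqvI :
    ((((iABC_AC × iACD_AC) × (iABC_BC × iBCD_BC) × (iACD_CD × iBCD_CD))) ×
      ((iABC_AB × iACD_AD × iBCD_BD) × (iABD_AB × iABD_AD × iABD_BD))) ≃
    ((iABC_AB × iABC_AC × iABC_BC) × (iABD_AB × iABD_AD × iABD_BD) ×
      (iACD_AC × iACD_AD × iACD_CD) × (iBCD_BC × iBCD_BD × iBCD_CD)) :=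
  ⟨fun z => ((z.2.1.1, z.1.1.1, z.1.2.1.1), z.2.2, (z.1.1.2, z.2.1.2.1, z.1.2.2.1),
      (z.1.2.1.2, z.2.1.2.2, z.1.2.2.2)),
    fun x => (((x.1.2.1, x.2.2.1.1), (x.1.2.2, x.2.2.2.1), (x.2.2.1.2.2, x.2.2.2.2.2)),
      ((x.1.1, x.2.2.1.2.1, x.2.2.2.2.1), x.2.1)),
    fun z => rfl, fun x => rfl⟩

open CoordAux in
lemma factC
    (ψABC : iABC_AB × iABC_AC × iABC_BC → ℂ)
    (ψABD : iABD_AB × iABD_AD × iABD_BD → ℂ)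
    (ψACD : iACD_AC × iACD_AD × iACD_CD → ℂ)
    (ψBCD : iBCD_BC × iBCD_BD × iBCD_CD → ℂ)
    (UAB : Matrix (kAB_A × kAB_B) (iABC_AB × iABD_AB) ℂ)
    (UAC : Matrix (kAC_A × kAC_C) (iABC_AC × iACD_AC) ℂ)
    (UAD : Matrix (kAD_A × kAD_D) (iABD_AD × iACD_AD) ℂ)
    (UBC : Matrix (kBC_B × kBC_C) (iABC_BC × iBCD_BC) ℂ)
    (UBD : Matrix (kBD_B × kBD_D) (iABD_BD × iBCD_BD) ℂ)
    (UCD : Matrix (kCD_C × kCD_D) (iACD_CD × iBCD_CD) ℂ)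
    (hAB : UABᴴ * UAB = 1) (hAD : UADᴴ * UAD = 1) (hBD : UBDᴴ * UBD = 1)
    (M : Matrix (kAC_C × kBC_C × kCD_C) (kAC_C × kBC_C × kCD_C) ℂ) :
    ∃ v : (iABC_AB × iABC_AC × iABC_BC) → (iACD_AC × iACD_AD × iACD_CD) →
        (iBCD_BC × iBCD_BD × iBCD_CD) → ℂ,
      ∀ p q r s,
      (∑ k, conj' (bigW UAB UAC UAD UBC UBD UCD k (p, q, r, s)) *
        opC M (outVec ψABC ψABD ψACD ψBCD UAB UAC UAD UBC UBD UCD) k)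
      = v p r s * ψABD q := by
  have hU : ∀ (y y' : (iABC_AB × iACD_AD × iBCD_BD) × (iABD_AB × iABD_AD × iABD_BD)),
      (∑ f, conj' (partyC_Up UAB UAD UBD f y.1 y.2) * partyC_Up UAB UAD UBD f y'.1 y'.2)
        = if y = y' then 1 else 0 := by
    intro y y'
    have := tensor3_iso UAB UAD UBD hAB hAD hBD
      (y.1.1, y.2.1) (y'.1.1, y'.2.1) (y.2.2.1, y.1.2.1) (y'.2.2.1, y'.1.2.1)
      (y.2.2.2, y.1.2.2) (y'.2.2.2, y'.1.2.2)
    rw [show (∑ f, conj' (partyC_Up UAB UAD UBD f y.1 y.2) * partyC_Up UAB UAD UBD f y'.1 y'.2)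
        = ∑ f : (kAB_A × kAB_B) × (kAD_A × kAD_D) × (kBD_B × kBD_D),
          conj' (UAB f.1 (y.1.1, y.2.1) * UAD f.2.1 (y.2.2.1, y.1.2.1) *
            UBD f.2.2 (y.2.2.2, y.1.2.2)) *
          (UAB f.1 (y'.1.1, y'.2.1) * UAD f.2.1 (y'.2.2.1, y'.1.2.1) *
            UBD f.2.2 (y'.2.2.2, y'.1.2.2))
      from Finset.sum_congr rfl fun f _ => by simp only [partyC_Up], this]
    refine if_congr ?_ rfl rfl
    constructor
    · rintro ⟨h1, h2, h3⟩
      rw [Prod.ext_iff] at h1 h2 h3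
      obtain ⟨y1, y2⟩ := y; obtain ⟨y1', y2'⟩ := y'
      obtain ⟨a1, a2, a3⟩ := y1; obtain ⟨b1, b2, b3⟩ := y2
      obtain ⟨a1', a2', a3'⟩ := y1'; obtain ⟨b1', b2', b3'⟩ := y2'
      simp_all
    · rintro rfl; exact ⟨rfl, rfl, rfl⟩
  refine ⟨fun p r s =>
    ∑ t : ((kAC_C × kBC_C × kCD_C) × (kAC_A × kBC_B × kCD_D)) ×
        ((kAC_C × kBC_C × kCD_C) ×
          ((iABC_AC × iACD_AC) × (iABC_BC × iBCD_BC) × (iACD_CD × iBCD_CD))),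
      conj' (partyC_Ua UAC UBC UCD t.1.1 t.1.2 ((p.2.1, r.1), (p.2.2, s.1), (r.2.2, s.2.2))) *
        M t.1.1 t.2.1 * partyC_Ua UAC UBC UCD t.2.1 t.1.2 t.2.2 *
        partyC_u ψABC ψACD ψBCD t.2.2 (p.1, r.2.1, s.2.1), fun p q r s => ?_⟩
  have hout : ∀ (e : kAC_A × kBC_B × kCD_D)
      (f : (kAB_A × kAB_B) × (kAD_A × kAD_D) × (kBD_B × kBD_D))
      (a' : kAC_C × kBC_C × kCD_C),
      outVec ψABC ψABD ψACD ψBCD UAB UAC UAD UBC UBD UCD (partyC_eqvK ((a', e), f))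
        = ∑ z : ((iABC_AC × iACD_AC) × (iABC_BC × iBCD_BC) × (iACD_CD × iBCD_CD)) ×
            ((iABC_AB × iACD_AD × iBCD_BD) × (iABD_AB × iABD_AD × iABD_BD)),
          partyC_Ua UAC UBC UCD a' e z.1 * partyC_Up UAB UAD UBD f z.2.1 z.2.2 *
            (partyC_u ψABC ψACD ψBCD z.1 z.2.1 * ψABD z.2.2) := by
    intro e f a'
    simp only [outVec]
    refine (Fintype.sum_equiv partyC_eqvI _ _ (fun z => ?_)).symm
    simp only [partyC_eqvI, partyC_eqvK, Equiv.coe_fn_mk, bigW, srcVec, partyC_Ua, partyC_Up,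
      partyC_u, Prod.mk.eta]
    ring
  calc (∑ k, conj' (bigW UAB UAC UAD UBC UBD UCD k (p, q, r, s)) *
        opC M (outVec ψABC ψABD ψACD ψBCD UAB UAC UAD UBC UBD UCD) k)
      = ∑ j : ((kAC_C × kBC_C × kCD_C) × (kAC_A × kBC_B × kCD_D)) ×
          ((kAB_A × kAB_B) × (kAD_A × kAD_D) × (kBD_B × kBD_D)),
        conj' (partyC_Ua UAC UBC UCD j.1.1 j.1.2 ((p.2.1, r.1), (p.2.2, s.1), (r.2.2, s.2.2))) *
          conj' (partyC_Up UAB UAD UBD j.2 (p.1, r.2.1, s.2.1) q) *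
          (∑ a' : kAC_C × kBC_C × kCD_C, M j.1.1 a' *
            (∑ z : ((iABC_AC × iACD_AC) × (iABC_BC × iBCD_BC) × (iACD_CD × iBCD_CD)) ×
                ((iABC_AB × iACD_AD × iBCD_BD) × (iABD_AB × iABD_AD × iABD_BD)),
              partyC_Ua UAC UBC UCD a' j.1.2 z.1 * partyC_Up UAB UAD UBD j.2 z.2.1 z.2.2 *
                (partyC_u ψABC ψACD ψBCD z.1 z.2.1 * ψABD z.2.2))) := by
        refine (Fintype.sum_equiv partyC_eqvK _ _ (fun j => ?_)).symm
        rw [show ∀ X, opC M (outVec ψABC ψABD ψACD ψBCD UAB UAC UAD UBC UBD UCD)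
            (partyC_eqvK ((X, j.1.2), j.2))
            = ∑ a' : kAC_C × kBC_C × kCD_C, M X a' *
              (∑ z : ((iABC_AC × iACD_AC) × (iABC_BC × iBCD_BC) × (iACD_CD × iBCD_CD)) ×
                  ((iABC_AB × iACD_AD × iBCD_BD) × (iABD_AB × iABD_AD × iABD_BD)),
                partyC_Ua UAC UBC UCD a' j.1.2 z.1 * partyC_Up UAB UAD UBD j.2 z.2.1 z.2.2 *
                  (partyC_u ψABC ψACD ψBCD z.1 z.2.1 * ψABD z.2.2))
          from fun X => Finset.sum_congr rfl fun a' _ =>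
            congrArg (M X a' * ·) (hout j.1.2 j.2 a')]
        simp only [partyC_eqvK, Equiv.coe_fn_mk, bigW, partyC_Ua, partyC_Up, map_mul,
          Prod.mk.eta]
        ring
    _ = _ :=
      key (partyC_Ua UAC UBC UCD) (partyC_Up UAB UAD UBD) hU M (partyC_u ψABC ψACD ψBCD)
        ψABD ((p.2.1, r.1), (p.2.2, s.1), (r.2.2, s.2.2)) (p.1, r.2.1, s.2.1) q

/-! ### Party D -/

def partyD_Ua
    (UAD : Matrix (kAD_A × kAD_D) (iABD_AD × iACD_AD) ℂ)
    (UBD : Matrix (kBD_B × kBD_D) (iABD_BD × iBCD_BD) ℂ)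
    (UCD : Matrix (kCD_C × kCD_D) (iACD_CD × iBCD_CD) ℂ) :
    (kAD_D × kBD_D × kCD_D) → (kAD_A × kBD_B × kCD_C) →
    ((iABD_AD × iACD_AD) × (iABD_BD × iBCD_BD) × (iACD_CD × iBCD_CD)) → ℂ :=
  fun δ e zm => UAD (e.1, δ.1) zm.1 * UBD (e.2.1, δ.2.1) zm.2.1 * UCD (e.2.2, δ.2.2) zm.2.2

def partyD_Up
    (UAB : Matrix (kAB_A × kAB_B) (iABC_AB × iABD_AB) ℂ)
    (UAC : Matrix (kAC_A × kAC_C) (iABC_AC × iACD_AC) ℂ)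
    (UBC : Matrix (kBC_B × kBC_C) (iABC_BC × iBCD_BC) ℂ) :
    ((kAB_A × kAB_B) × (kAC_A × kAC_C) × (kBC_B × kBC_C)) →
    (iABD_AB × iACD_AC × iBCD_BC) → (iABC_AB × iABC_AC × iABC_BC) → ℂ :=
  fun f y1 y2 => UAB f.1 (y2.1, y1.1) * UAC f.2.1 (y2.2.1, y1.2.1) * UBC f.2.2 (y2.2.2, y1.2.2)

def partyD_u
    (ψABD : iABD_AB × iABD_AD × iABD_BD → ℂ)
    (ψACD : iACD_AC × iACD_AD × iACD_CD → ℂ)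
    (ψBCD : iBCD_BC × iBCD_BD × iBCD_CD → ℂ) :
    ((iABD_AD × iACD_AD) × (iABD_BD × iBCD_BD) × (iACD_CD × iBCD_CD)) →
    (iABD_AB × iACD_AC × iBCD_BC) → ℂ :=
  fun zm y1 => ψABD (y1.1, zm.1.1, zm.2.1.1) * ψACD (y1.2.1, zm.1.2, zm.2.2.1) *
    ψBCD (y1.2.2, zm.2.1.2, zm.2.2.2)

def partyD_eqvK :
    (((kAD_D × kBD_D × kCD_D) × (kAD_A × kBD_B × kCD_C)) ×
      ((kAB_A × kAB_B) × (kAC_A × kAC_C) × (kBC_B × kBC_C))) ≃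
    ((kAB_A × kAC_A × kAD_A) × (kAB_B × kBC_B × kBD_B) × (kAC_C × kBC_C × kCD_C) ×
      (kAD_D × kBD_D × kCD_D)) :=
  ⟨fun j => ((j.2.1.1, j.2.2.1.1, j.1.2.1), (j.2.1.2, j.2.2.2.1, j.1.2.2.1),
      (j.2.2.1.2, j.2.2.2.2, j.1.2.2.2), j.1.1),
    fun k => ((k.2.2.2, (k.1.2.2, k.2.1.2.2, k.2.2.1.2.2)),
      ((k.1.1, k.2.1.1), (k.1.2.1, k.2.2.1.1), (k.2.1.2.1, k.2.2.1.2.1))),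
    fun j => rfl, fun k => rfl⟩

def partyD_eqvI :
    ((((iABD_AD × iACD_AD) × (iABD_BD × iBCD_BD) × (iACD_CD × iBCD_CD))) ×
      ((iABD_AB × iACD_AC × iBCD_BC) × (iABC_AB × iABC_AC × iABC_BC))) ≃
    ((iABC_AB × iABC_AC × iABC_BC) × (iABD_AB × iABD_AD × iABD_BD) ×
      (iACD_AC × iACD_AD × iACD_CD) × (iBCD_BC × iBCD_BD × iBCD_CD)) :=
  ⟨fun z => (z.2.2, (z.2.1.1, z.1.1.1, z.1.2.1.1), (z.2.1.2.1, z.1.1.2, z.1.2.2.1),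
      (z.2.1.2.2, z.1.2.1.2, z.1.2.2.2)),
    fun x => (((x.2.1.2.1, x.2.2.1.2.1), (x.2.1.2.2, x.2.2.2.2.1), (x.2.2.1.2.2, x.2.2.2.2.2)),
      ((x.2.1.1, x.2.2.1.1, x.2.2.2.1), x.1)),
    fun z => rfl, fun x => rfl⟩

open CoordAux in
lemma factD
    (ψABC : iABC_AB × iABC_AC × iABC_BC → ℂ)
    (ψABD : iABD_AB × iABD_AD × iABD_BD → ℂ)
    (ψACD : iACD_AC × iACD_AD × iACD_CD → ℂ)
    (ψBCD : iBCD_BC × iBCD_BD × iBCD_CD → ℂ)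
    (UAB : Matrix (kAB_A × kAB_B) (iABC_AB × iABD_AB) ℂ)
    (UAC : Matrix (kAC_A × kAC_C) (iABC_AC × iACD_AC) ℂ)
    (UAD : Matrix (kAD_A × kAD_D) (iABD_AD × iACD_AD) ℂ)
    (UBC : Matrix (kBC_B × kBC_C) (iABC_BC × iBCD_BC) ℂ)
    (UBD : Matrix (kBD_B × kBD_D) (iABD_BD × iBCD_BD) ℂ)
    (UCD : Matrix (kCD_C × kCD_D) (iACD_CD × iBCD_CD) ℂ)
    (hAB : UABᴴ * UAB = 1) (hAC : UACᴴ * UAC = 1) (hBC : UBCᴴ * UBC = 1)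
    (M : Matrix (kAD_D × kBD_D × kCD_D) (kAD_D × kBD_D × kCD_D) ℂ) :
    ∃ v : (iABD_AB × iABD_AD × iABD_BD) → (iACD_AC × iACD_AD × iACD_CD) →
        (iBCD_BC × iBCD_BD × iBCD_CD) → ℂ,
      ∀ p q r s,
      (∑ k, conj' (bigW UAB UAC UAD UBC UBD UCD k (p, q, r, s)) *
        opD M (outVec ψABC ψABD ψACD ψBCD UAB UAC UAD UBC UBD UCD) k)
      = v q r s * ψABC p := by
  have hU : ∀ (y y' : (iABD_AB × iACD_AC × iBCD_BC) × (iABC_AB × iABC_AC × iABC_BC)),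
      (∑ f, conj' (partyD_Up UAB UAC UBC f y.1 y.2) * partyD_Up UAB UAC UBC f y'.1 y'.2)
        = if y = y' then 1 else 0 := by
    intro y y'
    have := tensor3_iso UAB UAC UBC hAB hAC hBC
      (y.2.1, y.1.1) (y'.2.1, y'.1.1) (y.2.2.1, y.1.2.1) (y'.2.2.1, y'.1.2.1)
      (y.2.2.2, y.1.2.2) (y'.2.2.2, y'.1.2.2)
    rw [show (∑ f, conj' (partyD_Up UAB UAC UBC f y.1 y.2) * partyD_Up UAB UAC UBC f y'.1 y'.2)
        = ∑ f : (kAB_A × kAB_B) × (kAC_A × kAC_C) × (kBC_B × kBC_C),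
          conj' (UAB f.1 (y.2.1, y.1.1) * UAC f.2.1 (y.2.2.1, y.1.2.1) *
            UBC f.2.2 (y.2.2.2, y.1.2.2)) *
          (UAB f.1 (y'.2.1, y'.1.1) * UAC f.2.1 (y'.2.2.1, y'.1.2.1) *
            UBC f.2.2 (y'.2.2.2, y'.1.2.2))
      from Finset.sum_congr rfl fun f _ => by simp only [partyD_Up], this]
    refine if_congr ?_ rfl rfl
    constructor
    · rintro ⟨h1, h2, h3⟩
      rw [Prod.ext_iff] at h1 h2 h3
      obtain ⟨y1, y2⟩ := y; obtain ⟨y1', y2'⟩ := y'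
      obtain ⟨a1, a2, a3⟩ := y1; obtain ⟨b1, b2, b3⟩ := y2
      obtain ⟨a1', a2', a3'⟩ := y1'; obtain ⟨b1', b2', b3'⟩ := y2'
      simp_all
    · rintro rfl; exact ⟨rfl, rfl, rfl⟩
  refine ⟨fun q r s =>
    ∑ t : ((kAD_D × kBD_D × kCD_D) × (kAD_A × kBD_B × kCD_C)) ×
        ((kAD_D × kBD_D × kCD_D) ×
          ((iABD_AD × iACD_AD) × (iABD_BD × iBCD_BD) × (iACD_CD × iBCD_CD))),
      conj' (partyD_Ua UAD UBD UCD t.1.1 t.1.2 ((q.2.1, r.2.1), (q.2.2, s.2.1), (r.2.2, s.2.2))) *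
        M t.1.1 t.2.1 * partyD_Ua UAD UBD UCD t.2.1 t.1.2 t.2.2 *
        partyD_u ψABD ψACD ψBCD t.2.2 (q.1, r.1, s.1), fun p q r s => ?_⟩
  have hout : ∀ (e : kAD_A × kBD_B × kCD_C)
      (f : (kAB_A × kAB_B) × (kAC_A × kAC_C) × (kBC_B × kBC_C))
      (a' : kAD_D × kBD_D × kCD_D),
      outVec ψABC ψABD ψACD ψBCD UAB UAC UAD UBC UBD UCD (partyD_eqvK ((a', e), f))
        = ∑ z : ((iABD_AD × iACD_AD) × (iABD_BD × iBCD_BD) × (iACD_CD × iBCD_CD)) ×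
            ((iABD_AB × iACD_AC × iBCD_BC) × (iABC_AB × iABC_AC × iABC_BC)),
          partyD_Ua UAD UBD UCD a' e z.1 * partyD_Up UAB UAC UBC f z.2.1 z.2.2 *
            (partyD_u ψABD ψACD ψBCD z.1 z.2.1 * ψABC z.2.2) := by
    intro e f a'
    simp only [outVec]
    refine (Fintype.sum_equiv partyD_eqvI _ _ (fun z => ?_)).symm
    simp only [partyD_eqvI, partyD_eqvK, Equiv.coe_fn_mk, bigW, srcVec, partyD_Ua, partyD_Up,
      partyD_u, Prod.mk.eta]
    ring
  calc (∑ k, conj' (bigW UAB UAC UAD UBC UBD UCD k (p, q, r, s)) *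
        opD M (outVec ψABC ψABD ψACD ψBCD UAB UAC UAD UBC UBD UCD) k)
      = ∑ j : ((kAD_D × kBD_D × kCD_D) × (kAD_A × kBD_B × kCD_C)) ×
          ((kAB_A × kAB_B) × (kAC_A × kAC_C) × (kBC_B × kBC_C)),
        conj' (partyD_Ua UAD UBD UCD j.1.1 j.1.2 ((q.2.1, r.2.1), (q.2.2, s.2.1), (r.2.2, s.2.2))) *
          conj' (partyD_Up UAB UAC UBC j.2 (q.1, r.1, s.1) p) *
          (∑ a' : kAD_D × kBD_D × kCD_D, M j.1.1 a' *
            (∑ z : ((iABD_AD × iACD_AD) × (iABD_BD × iBCD_BD) × (iACD_CD × iBCD_CD)) ×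
                ((iABD_AB × iACD_AC × iBCD_BC) × (iABC_AB × iABC_AC × iABC_BC)),
              partyD_Ua UAD UBD UCD a' j.1.2 z.1 * partyD_Up UAB UAC UBC j.2 z.2.1 z.2.2 *
                (partyD_u ψABD ψACD ψBCD z.1 z.2.1 * ψABC z.2.2))) := by
        refine (Fintype.sum_equiv partyD_eqvK _ _ (fun j => ?_)).symm
        rw [show ∀ X, opD M (outVec ψABC ψABD ψACD ψBCD UAB UAC UAD UBC UBD UCD)
            (partyD_eqvK ((X, j.1.2), j.2))
            = ∑ a' : kAD_D × kBD_D × kCD_D, M X a' *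
              (∑ z : ((iABD_AD × iACD_AD) × (iABD_BD × iBCD_BD) × (iACD_CD × iBCD_CD)) ×
                  ((iABD_AB × iACD_AC × iBCD_BC) × (iABC_AB × iABC_AC × iABC_BC)),
                partyD_Ua UAD UBD UCD a' j.1.2 z.1 * partyD_Up UAB UAC UBC j.2 z.2.1 z.2.2 *
                  (partyD_u ψABD ψACD ψBCD z.1 z.2.1 * ψABC z.2.2))
          from fun X => Finset.sum_congr rfl fun a' _ =>
            congrArg (M X a' * ·) (hout j.1.2 j.2 a')]
        simp only [partyD_eqvK, Equiv.coe_fn_mk, bigW, partyD_Ua, partyD_Up, map_mul,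
          Prod.mk.eta]
        ring
    _ = _ :=
      key (partyD_Ua UAD UBD UCD) (partyD_Up UAB UAC UBC) hU M (partyD_u ψABD ψACD ψBCD)
        ψABC ((q.2.1, r.2.1), (q.2.2, s.2.1), (r.2.2, s.2.2)) (q.1, r.1, s.1) p


def regroupI :
    ((iABC_AB × iABD_AB) × (iABC_AC × iACD_AC) × (iABD_AD × iACD_AD) × (iABC_BC × iBCD_BC) ×
      (iABD_BD × iBCD_BD) × (iACD_CD × iBCD_CD)) ≃
    ((iABC_AB × iABC_AC × iABC_BC) × (iABD_AB × iABD_AD × iABD_BD) ×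
      (iACD_AC × iACD_AD × iACD_CD) × (iBCD_BC × iBCD_BD × iBCD_CD)) :=
  ⟨fun y => ((y.1.1, y.2.1.1, y.2.2.2.1.1), (y.1.2, y.2.2.1.1, y.2.2.2.2.1.1),
      (y.2.1.2, y.2.2.1.2, y.2.2.2.2.2.1), (y.2.2.2.1.2, y.2.2.2.2.1.2, y.2.2.2.2.2.2)),
    fun x => ((x.1.1, x.2.1.1), (x.1.2.1, x.2.2.1.1), (x.2.1.2.1, x.2.2.1.2.1),
      (x.1.2.2, x.2.2.2.1), (x.2.1.2.2, x.2.2.2.2.1), (x.2.2.1.2.2, x.2.2.2.2.2)),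
    fun y => rfl, fun x => rfl⟩

open CoordAux in
lemma bigW_coiso
    (UAB : Matrix (kAB_A × kAB_B) (iABC_AB × iABD_AB) ℂ)
    (UAC : Matrix (kAC_A × kAC_C) (iABC_AC × iACD_AC) ℂ)
    (UAD : Matrix (kAD_A × kAD_D) (iABD_AD × iACD_AD) ℂ)
    (UBC : Matrix (kBC_B × kBC_C) (iABC_BC × iBCD_BC) ℂ)
    (UBD : Matrix (kBD_B × kBD_D) (iABD_BD × iBCD_BD) ℂ)
    (UCD : Matrix (kCD_C × kCD_D) (iACD_CD × iBCD_CD) ℂ)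
    (hAB : UAB * UABᴴ = 1) (hAC : UAC * UACᴴ = 1) (hAD : UAD * UADᴴ = 1)
    (hBC : UBC * UBCᴴ = 1) (hBD : UBD * UBDᴴ = 1) (hCD : UCD * UCDᴴ = 1)
    (k k' : (kAB_A × kAC_A × kAD_A) × (kAB_B × kBC_B × kBD_B) × (kAC_C × kBC_C × kCD_C) ×
      (kAD_D × kBD_D × kCD_D)) :
    ∑ x, bigW UAB UAC UAD UBC UBD UCD k x * conj' (bigW UAB UAC UAD UBC UBD UCD k' x)
      = if k = k' then 1 else 0 := by
  calc ∑ x, bigW UAB UAC UAD UBC UBD UCD k x * conj' (bigW UAB UAC UAD UBC UBD UCD k' x)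
      = ∑ y : (iABC_AB × iABD_AB) × (iABC_AC × iACD_AC) × (iABD_AD × iACD_AD) ×
          (iABC_BC × iBCD_BC) × (iABD_BD × iBCD_BD) × (iACD_CD × iBCD_CD),
        (UAB (k.1.1, k.2.1.1) y.1 * UAC (k.1.2.1, k.2.2.1.1) y.2.1 *
          UAD (k.1.2.2, k.2.2.2.1) y.2.2.1 * UBC (k.2.1.2.1, k.2.2.1.2.1) y.2.2.2.1 *
          UBD (k.2.1.2.2, k.2.2.2.2.1) y.2.2.2.2.1 * UCD (k.2.2.1.2.2, k.2.2.2.2.2) y.2.2.2.2.2) *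
        conj' (UAB (k'.1.1, k'.2.1.1) y.1 * UAC (k'.1.2.1, k'.2.2.1.1) y.2.1 *
          UAD (k'.1.2.2, k'.2.2.2.1) y.2.2.1 * UBC (k'.2.1.2.1, k'.2.2.1.2.1) y.2.2.2.1 *
          UBD (k'.2.1.2.2, k'.2.2.2.2.1) y.2.2.2.2.1 * UCD (k'.2.2.1.2.2, k'.2.2.2.2.2) y.2.2.2.2.2) := by
        refine (Fintype.sum_equiv regroupI _ _ (fun y => ?_)).symm
        simp only [regroupI, Equiv.coe_fn_mk, bigW, Prod.mk.eta]
    _ = if (k.1.1, k.2.1.1) = (k'.1.1, k'.2.1.1) ∧ (k.1.2.1, k.2.2.1.1) = (k'.1.2.1, k'.2.2.1.1) ∧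
          (k.1.2.2, k.2.2.2.1) = (k'.1.2.2, k'.2.2.2.1) ∧
          (k.2.1.2.1, k.2.2.1.2.1) = (k'.2.1.2.1, k'.2.2.1.2.1) ∧
          (k.2.1.2.2, k.2.2.2.2.1) = (k'.2.1.2.2, k'.2.2.2.2.1) ∧
          (k.2.2.1.2.2, k.2.2.2.2.2) = (k'.2.2.1.2.2, k'.2.2.2.2.2) then 1 else 0 :=
        tensor6_coiso UAB UAC UAD UBC UBD UCD hAB hAC hAD hBC hBD hCD _ _ _ _ _ _ _ _ _ _ _ _
    _ = if k = k' then 1 else 0 := by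
        refine if_congr ?_ rfl rfl
        constructor
        · rintro ⟨h1, h2, h3, h4, h5, h6⟩
          rw [Prod.ext_iff] at h1 h2 h3 h4 h5 h6
          obtain ⟨⟨a1, a2, a3⟩, ⟨b1, b2, b3⟩, ⟨c1, c2, c3⟩, ⟨d1, d2, d3⟩⟩ := k
          obtain ⟨⟨a1', a2', a3'⟩, ⟨b1', b2', b3'⟩, ⟨c1', c2', c3'⟩, ⟨d1', d2', d3'⟩⟩ := k'
          simp_all
        · rintro rfl; exact ⟨rfl, rfl, rfl, rfl, rfl, rfl⟩


open CoordAux in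
/-- **Perfect coordination is impossible in the canonical four-party circuit within quantum
theory**: if the four source states are unit vectors, the six transformations are unitary,
and each party performs a binary projective measurement, then the output distribution cannot
be `P(a,b,c,d) = 1/2` if `a=b=c=d` and `0` otherwise. -/
theorem no_perfect_coordination_without_common_cause
    (ψABC : iABC_AB × iABC_AC × iABC_BC → ℂ)
    (ψABD : iABD_AB × iABD_AD × iABD_BD → ℂ)
    (ψACD : iACD_AC × iACD_AD × iACD_CD → ℂ)
    (ψBCD : iBCD_BC × iBCD_BD × iBCD_CD → ℂ)
    (hψABC : ∑ x, ‖ψABC x‖ ^ 2 = 1) (hψABD : ∑ x, ‖ψABD x‖ ^ 2 = 1)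
    (hψACD : ∑ x, ‖ψACD x‖ ^ 2 = 1) (hψBCD : ∑ x, ‖ψBCD x‖ ^ 2 = 1)
    (UAB : Matrix (kAB_A × kAB_B) (iABC_AB × iABD_AB) ℂ)
    (UAC : Matrix (kAC_A × kAC_C) (iABC_AC × iACD_AC) ℂ)
    (UAD : Matrix (kAD_A × kAD_D) (iABD_AD × iACD_AD) ℂ)
    (UBC : Matrix (kBC_B × kBC_C) (iABC_BC × iBCD_BC) ℂ)
    (UBD : Matrix (kBD_B × kBD_D) (iABD_BD × iBCD_BD) ℂ)
    (UCD : Matrix (kCD_C × kCD_D) (iACD_CD × iBCD_CD) ℂ)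
    (hUAB : UABᴴ * UAB = 1 ∧ UAB * UABᴴ = 1) (hUAC : UACᴴ * UAC = 1 ∧ UAC * UACᴴ = 1)
    (hUAD : UADᴴ * UAD = 1 ∧ UAD * UADᴴ = 1) (hUBC : UBCᴴ * UBC = 1 ∧ UBC * UBCᴴ = 1)
    (hUBD : UBDᴴ * UBD = 1 ∧ UBD * UBDᴴ = 1) (hUCD : UCDᴴ * UCD = 1 ∧ UCD * UCDᴴ = 1)
    (PiA : Bool → Matrix (kAB_A × kAC_A × kAD_A) (kAB_A × kAC_A × kAD_A) ℂ)
    (PiB : Bool → Matrix (kAB_B × kBC_B × kBD_B) (kAB_B × kBC_B × kBD_B) ℂ)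
    (PiC : Bool → Matrix (kAC_C × kBC_C × kCD_C) (kAC_C × kBC_C × kCD_C) ℂ)
    (PiD : Bool → Matrix (kAD_D × kBD_D × kCD_D) (kAD_D × kBD_D × kCD_D) ℂ)
    (hPiA : ∀ t, (PiA t).IsHermitian ∧ PiA t * PiA t = PiA t)
    (hPiB : ∀ t, (PiB t).IsHermitian ∧ PiB t * PiB t = PiB t)
    (hPiC : ∀ t, (PiC t).IsHermitian ∧ PiC t * PiC t = PiC t)
    (hPiD : ∀ t, (PiD t).IsHermitian ∧ PiD t * PiD t = PiD t)
    (hPiAc : PiA false + PiA true = 1) (hPiBc : PiB false + PiB true = 1)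
    (hPiCc : PiC false + PiC true = 1) (hPiDc : PiD false + PiD true = 1) :
    ¬ ∀ a b c d : Bool,
        circuitProb ψABC ψABD ψACD ψBCD UAB UAC UAD UBC UBD UCD PiA PiB PiC PiD a b c d =
          if a = b ∧ b = c ∧ c = d then (1 / 2 : ℂ) else 0 := by
  classical
  intro H
  -- probabilities in inner-product form
  have hQ : ∀ a b c d : Bool,
      ip (outVec ψABC ψABD ψACD ψBCD UAB UAC UAD UBC UBD UCD)
        (opA (PiA a) (opB (PiB b) (opC (PiC c)
          (opD (PiD d) (outVec ψABC ψABD ψACD ψBCD UAB UAC UAD UBC UBD UCD))))) =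
        if a = b ∧ b = c ∧ c = d then (1 / 2 : ℂ) else 0 :=
    fun a b c d =>
      (circuitProb_eq_ip ψABC ψABD ψACD ψBCD UAB UAC UAD UBC UBD UCD PiA PiB PiC PiD
        a b c d).symm.trans (H a b c d)
  obtain ⟨Φ, hΦdef⟩ : ∃ Φ, outVec ψABC ψABD ψACD ψBCD UAB UAC UAD UBC UBD UCD = Φ := ⟨_, rfl⟩
  obtain ⟨W, hWdef⟩ : ∃ W, bigW UAB UAC UAD UBC UBD UCD = W := ⟨_, rfl⟩
  have hΦval : ∀ k, Φ k = ∑ x, W k x * srcVec ψABC ψABD ψACD ψBCD x := fun k => by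
    rw [← hΦdef, ← hWdef]; rfl
  rw [hΦdef] at hQ
  -- basic matrix algebra for the ±1 observables
  have obsA : ((PiA false - PiA true)ᴴ = PiA false - PiA true) ∧
      (PiA false - PiA true) * (PiA false - PiA true) = 1 := by
    have hf : PiA false = 1 - PiA true := eq_sub_of_add_eq hPiAc
    have h1 : PiA false * PiA true = 0 := by
      rw [hf, Matrix.sub_mul, Matrix.one_mul, (hPiA true).2, sub_self]
    have h2 : PiA true * PiA false = 0 := by
      rw [hf, Matrix.mul_sub, Matrix.mul_one, (hPiA true).2, sub_self]
    constructor
    · rw [Matrix.conjTranspose_sub, (hPiA false).1.eq, (hPiA true).1.eq]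
    · rw [Matrix.sub_mul, Matrix.mul_sub, Matrix.mul_sub, (hPiA false).2, (hPiA true).2,
        h1, h2, sub_zero, zero_sub, sub_neg_eq_add, hPiAc]
  have obsB : ((PiB false - PiB true)ᴴ = PiB false - PiB true) ∧
      (PiB false - PiB true) * (PiB false - PiB true) = 1 := by
    have hf : PiB false = 1 - PiB true := eq_sub_of_add_eq hPiBc
    have h1 : PiB false * PiB true = 0 := by
      rw [hf, Matrix.sub_mul, Matrix.one_mul, (hPiB true).2, sub_self]
    have h2 : PiB true * PiB false = 0 := by
      rw [hf, Matrix.mul_sub, Matrix.mul_one, (hPiB true).2, sub_self]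
    constructor
    · rw [Matrix.conjTranspose_sub, (hPiB false).1.eq, (hPiB true).1.eq]
    · rw [Matrix.sub_mul, Matrix.mul_sub, Matrix.mul_sub, (hPiB false).2, (hPiB true).2,
        h1, h2, sub_zero, zero_sub, sub_neg_eq_add, hPiBc]
  have obsC : ((PiC false - PiC true)ᴴ = PiC false - PiC true) ∧
      (PiC false - PiC true) * (PiC false - PiC true) = 1 := by
    have hf : PiC false = 1 - PiC true := eq_sub_of_add_eq hPiCc
    have h1 : PiC false * PiC true = 0 := by
      rw [hf, Matrix.sub_mul, Matrix.one_mul, (hPiC true).2, sub_self]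
    have h2 : PiC true * PiC false = 0 := by
      rw [hf, Matrix.mul_sub, Matrix.mul_one, (hPiC true).2, sub_self]
    constructor
    · rw [Matrix.conjTranspose_sub, (hPiC false).1.eq, (hPiC true).1.eq]
    · rw [Matrix.sub_mul, Matrix.mul_sub, Matrix.mul_sub, (hPiC false).2, (hPiC true).2,
        h1, h2, sub_zero, zero_sub, sub_neg_eq_add, hPiCc]
  have obsD : ((PiD false - PiD true)ᴴ = PiD false - PiD true) ∧
      (PiD false - PiD true) * (PiD false - PiD true) = 1 := by
    have hf : PiD false = 1 - PiD true := eq_sub_of_add_eq hPiDc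
    have h1 : PiD false * PiD true = 0 := by
      rw [hf, Matrix.sub_mul, Matrix.one_mul, (hPiD true).2, sub_self]
    have h2 : PiD true * PiD false = 0 := by
      rw [hf, Matrix.mul_sub, Matrix.mul_one, (hPiD true).2, sub_self]
    constructor
    · rw [Matrix.conjTranspose_sub, (hPiD false).1.eq, (hPiD true).1.eq]
    · rw [Matrix.sub_mul, Matrix.mul_sub, Matrix.mul_sub, (hPiD false).2, (hPiD true).2,
        h1, h2, sub_zero, zero_sub, sub_neg_eq_add, hPiDc]
  -- scalar values from the hypothesis
  have hPP : ip Φ Φ = 1 := by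
    have h0 : ip Φ (opA 1 (opB 1 (opC 1 (opD 1 Φ)))) = 1 := by
      rw [← hPiAc, ← hPiBc, ← hPiCc, ← hPiDc]
      simp only [opA_addM, opB_addM, opC_addM, opD_addM, opA_vadd, opB_vadd, opC_vadd,
        opD_vadd, ip_add_right]
      simp only [hQ]
      norm_num
    simpa using h0
  have hOA : ip Φ (opA (PiA false - PiA true) Φ) = 0 := by
    have h0 : ip Φ (opA (PiA false - PiA true) (opB 1 (opC 1 (opD 1 Φ)))) = 0 := by
      rw [← hPiBc, ← hPiCc, ← hPiDc]
      simp only [opA_sub, opB_addM, opC_addM, opD_addM, opA_vadd, opB_vadd, opC_vadd,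
        opD_vadd, opA_vsub, opB_vsub, opC_vsub, opD_vsub, ip_add_right, ip_sub_right]
      simp only [hQ]
      norm_num
    simpa using h0
  have hABv : ip Φ (opA (PiA false - PiA true) (opB (PiB false - PiB true) Φ)) = 1 := by
    have h0 : ip Φ (opA (PiA false - PiA true) (opB (PiB false - PiB true)
        (opC 1 (opD 1 Φ)))) = 1 := by
      rw [← hPiCc, ← hPiDc]
      simp only [opA_sub, opB_sub, opC_addM, opD_addM, opA_vadd, opB_vadd, opC_vadd,
        opD_vadd, opA_vsub, opB_vsub, opC_vsub, opD_vsub, ip_add_right, ip_sub_right]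
      simp only [hQ]
      norm_num
    simpa using h0
  have hACv : ip Φ (opA (PiA false - PiA true) (opC (PiC false - PiC true) Φ)) = 1 := by
    have h0 : ip Φ (opA (PiA false - PiA true) (opB 1 (opC (PiC false - PiC true)
        (opD 1 Φ)))) = 1 := by
      rw [← hPiBc, ← hPiDc]
      simp only [opA_sub, opC_sub, opB_addM, opD_addM, opA_vadd, opB_vadd, opC_vadd,
        opD_vadd, opA_vsub, opB_vsub, opC_vsub, opD_vsub, ip_add_right, ip_sub_right]
      simp only [hQ]
      norm_num
    simpa using h0
  have hADv : ip Φ (opA (PiA false - PiA true) (opD (PiD false - PiD true) Φ)) = 1 := by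
    have h0 : ip Φ (opA (PiA false - PiA true) (opB 1 (opC 1 (opD (PiD false - PiD true)
        Φ)))) = 1 := by
      rw [← hPiBc, ← hPiCc]
      simp only [opA_sub, opD_sub, opB_addM, opC_addM, opA_vadd, opB_vadd, opC_vadd,
        opD_vadd, opA_vsub, opB_vsub, opC_vsub, opD_vsub, ip_add_right, ip_sub_right]
      simp only [hQ]
      norm_num
    simpa using h0
  -- norms of the four observable-rotated vectors
  have hAA : ip (opA (PiA false - PiA true) Φ) (opA (PiA false - PiA true) Φ) = 1 := by
    rw [ip_opA_left, obsA.1, opA_opA, obsA.2, opA_one]; exact hPP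
  have hBB : ip (opB (PiB false - PiB true) Φ) (opB (PiB false - PiB true) Φ) = 1 := by
    rw [ip_opB_left, obsB.1, opB_opB, obsB.2, opB_one]; exact hPP
  have hCC : ip (opC (PiC false - PiC true) Φ) (opC (PiC false - PiC true) Φ) = 1 := by
    rw [ip_opC_left, obsC.1, opC_opC, obsC.2, opC_one]; exact hPP
  have hDD : ip (opD (PiD false - PiD true) Φ) (opD (PiD false - PiD true) Φ) = 1 := by
    rw [ip_opD_left, obsD.1, opD_opD, obsD.2, opD_one]; exact hPP
  -- cross inner products
  have hAB1 : ip (opA (PiA false - PiA true) Φ) (opB (PiB false - PiB true) Φ) = 1 := by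
    rw [ip_opA_left, obsA.1]; exact hABv
  have hAC1 : ip (opA (PiA false - PiA true) Φ) (opC (PiC false - PiC true) Φ) = 1 := by
    rw [ip_opA_left, obsA.1]; exact hACv
  have hAD1 : ip (opA (PiA false - PiA true) Φ) (opD (PiD false - PiD true) Φ) = 1 := by
    rw [ip_opA_left, obsA.1]; exact hADv
  have hBA1 : ip (opB (PiB false - PiB true) Φ) (opA (PiA false - PiA true) Φ) = 1 := by
    rw [← ip_conj, hAB1, map_one]
  have hCA1 : ip (opC (PiC false - PiC true) Φ) (opA (PiA false - PiA true) Φ) = 1 := by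
    rw [← ip_conj, hAC1, map_one]
  have hDA1 : ip (opD (PiD false - PiD true) Φ) (opA (PiA false - PiA true) Φ) = 1 := by
    rw [← ip_conj, hAD1, map_one]
  -- the four rotated vectors coincide
  have hEqB : opA (PiA false - PiA true) Φ = opB (PiB false - PiB true) Φ := by
    have hd : ∑ k, conj' ((opA (PiA false - PiA true) Φ - opB (PiB false - PiB true) Φ) k) *
        (opA (PiA false - PiA true) Φ - opB (PiB false - PiB true) Φ) k = 0 := by
      have e : (∑ k, conj' ((opA (PiA false - PiA true) Φ - opB (PiB false - PiB true) Φ) k) *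
          (opA (PiA false - PiA true) Φ - opB (PiB false - PiB true) Φ) k)
          = ip (opA (PiA false - PiA true) Φ - opB (PiB false - PiB true) Φ)
            (opA (PiA false - PiA true) Φ - opB (PiB false - PiB true) Φ) := rfl
      rw [e, ip_sub_left, ip_sub_right, ip_sub_right, hAA, hAB1, hBA1, hBB]; ring
    funext k
    have := CoordAux.sum_conj_mul_self_zero _ hd k
    rw [Pi.sub_apply, sub_eq_zero] at this
    exact this
  have hEqC : opA (PiA false - PiA true) Φ = opC (PiC false - PiC true) Φ := by
    have hd : ∑ k, conj' ((opA (PiA false - PiA true) Φ - opC (PiC false - PiC true) Φ) k) *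
        (opA (PiA false - PiA true) Φ - opC (PiC false - PiC true) Φ) k = 0 := by
      have e : (∑ k, conj' ((opA (PiA false - PiA true) Φ - opC (PiC false - PiC true) Φ) k) *
          (opA (PiA false - PiA true) Φ - opC (PiC false - PiC true) Φ) k)
          = ip (opA (PiA false - PiA true) Φ - opC (PiC false - PiC true) Φ)
            (opA (PiA false - PiA true) Φ - opC (PiC false - PiC true) Φ) := rfl
      rw [e, ip_sub_left, ip_sub_right, ip_sub_right, hAA, hAC1, hCA1, hCC]; ring
    funext k
    have := CoordAux.sum_conj_mul_self_zero _ hd k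
    rw [Pi.sub_apply, sub_eq_zero] at this
    exact this
  have hEqD : opA (PiA false - PiA true) Φ = opD (PiD false - PiD true) Φ := by
    have hd : ∑ k, conj' ((opA (PiA false - PiA true) Φ - opD (PiD false - PiD true) Φ) k) *
        (opA (PiA false - PiA true) Φ - opD (PiD false - PiD true) Φ) k = 0 := by
      have e : (∑ k, conj' ((opA (PiA false - PiA true) Φ - opD (PiD false - PiD true) Φ) k) *
          (opA (PiA false - PiA true) Φ - opD (PiD false - PiD true) Φ) k)
          = ip (opA (PiA false - PiA true) Φ - opD (PiD false - PiD true) Φ)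
            (opA (PiA false - PiA true) Φ - opD (PiD false - PiD true) Φ) := rfl
      rw [e, ip_sub_left, ip_sub_right, ip_sub_right, hAA, hAD1, hDA1, hDD]; ring
    funext k
    have := CoordAux.sum_conj_mul_self_zero _ hd k
    rw [Pi.sub_apply, sub_eq_zero] at this
    exact this
  -- structural factorizations
  obtain ⟨vA, hfA⟩ := factA ψABC ψABD ψACD ψBCD UAB UAC UAD UBC UBD UCD
    hUBC.1 hUBD.1 hUCD.1 (PiA false - PiA true)
  obtain ⟨vB, hfB⟩ := factB ψABC ψABD ψACD ψBCD UAB UAC UAD UBC UBD UCD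
    hUAC.1 hUAD.1 hUCD.1 (PiB false - PiB true)
  obtain ⟨vC, hfC⟩ := factC ψABC ψABD ψACD ψBCD UAB UAC UAD UBC UBD UCD
    hUAB.1 hUAD.1 hUBD.1 (PiC false - PiC true)
  obtain ⟨vD, hfD⟩ := factD ψABC ψABD ψACD ψBCD UAB UAC UAD UBC UBD UCD
    hUAB.1 hUAC.1 hUBC.1 (PiD false - PiD true)
  simp only [hΦdef, hWdef] at hfA hfB hfC hfD
  simp only [← hEqB] at hfB
  simp only [← hEqC] at hfC
  simp only [← hEqD] at hfD
  obtain ⟨ΦA, hΦAdef⟩ : ∃ g, opA (PiA false - PiA true) Φ = g := ⟨_, rfl⟩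
  simp only [hΦAdef] at hfA hfB hfC hfD hOA hAA
  -- normalization of the source states
  have hsABC : ∑ p, conj' (ψABC p) * ψABC p = 1 := by
    rw [CoordAux.sum_conj_mul_self_coe, hψABC]; norm_num
  have hsABD : ∑ p, conj' (ψABD p) * ψABD p = 1 := by
    rw [CoordAux.sum_conj_mul_self_coe, hψABD]; norm_num
  have hsACD : ∑ p, conj' (ψACD p) * ψACD p = 1 := by
    rw [CoordAux.sum_conj_mul_self_coe, hψACD]; norm_num
  have hsBCD : ∑ p, conj' (ψBCD p) * ψBCD p = 1 := by
    rw [CoordAux.sum_conj_mul_self_coe, hψBCD]; norm_num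
  -- trace out the sources one by one
  have hg1 : ∀ q r s, vD q r s = (∑ p, conj' (ψABC p) * vA p q r) * ψBCD s := by
    intro q r s
    calc vD q r s = ∑ p, conj' (ψABC p) * (vD q r s * ψABC p) :=
          (CoordAux.sum_conj_smul ψABC _ hsABC).symm
      _ = ∑ p, conj' (ψABC p) * (vA p q r * ψBCD s) :=
          Finset.sum_congr rfl fun p _ => by rw [← hfD p q r s, hfA p q r s]
      _ = (∑ p, conj' (ψABC p) * vA p q r) * ψBCD s := by
          rw [Finset.sum_mul]; exact Finset.sum_congr rfl fun p _ => by ring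
  have hg2 : ∀ q r, (∑ p, conj' (ψABC p) * vA p q r)
      = (∑ s, conj' (ψBCD s) * (∑ p, conj' (ψABC p) * vB p q s)) * ψACD r := by
    intro q r
    calc (∑ p, conj' (ψABC p) * vA p q r)
        = ∑ s, conj' (ψBCD s) * ((∑ p, conj' (ψABC p) * vA p q r) * ψBCD s) :=
          (CoordAux.sum_conj_smul ψBCD _ hsBCD).symm
      _ = ∑ s, conj' (ψBCD s) * (∑ p, conj' (ψABC p) * (vB p q s * ψACD r)) := by
          refine Finset.sum_congr rfl fun s _ => congrArg _ ?_
          calc (∑ p, conj' (ψABC p) * vA p q r) * ψBCD s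
              = ∑ p, conj' (ψABC p) * (vA p q r * ψBCD s) := by
                rw [Finset.sum_mul]; exact Finset.sum_congr rfl fun p _ => by ring
            _ = ∑ p, conj' (ψABC p) * (vB p q s * ψACD r) :=
                Finset.sum_congr rfl fun p _ => by rw [← hfA p q r s, hfB p q r s]
      _ = (∑ s, conj' (ψBCD s) * (∑ p, conj' (ψABC p) * vB p q s)) * ψACD r := by
          simp only [Finset.mul_sum, Finset.sum_mul]
          exact Finset.sum_congr rfl fun s _ => Finset.sum_congr rfl fun p _ => by ring
  have hg3 : ∀ q, (∑ s, conj' (ψBCD s) * (∑ p, conj' (ψABC p) * vB p q s))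
      = (∑ r, conj' (ψACD r) * (∑ s, conj' (ψBCD s) *
          (∑ p, conj' (ψABC p) * vC p r s))) * ψABD q := by
    intro q
    calc (∑ s, conj' (ψBCD s) * (∑ p, conj' (ψABC p) * vB p q s))
        = ∑ r, conj' (ψACD r) * ((∑ s, conj' (ψBCD s) * (∑ p, conj' (ψABC p) * vB p q s)) *
            ψACD r) := (CoordAux.sum_conj_smul ψACD _ hsACD).symm
      _ = ∑ r, conj' (ψACD r) * (∑ s, conj' (ψBCD s) *
            (∑ p, conj' (ψABC p) * (vC p r s * ψABD q))) := by
          refine Finset.sum_congr rfl fun r _ => congrArg _ ?_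
          calc (∑ s, conj' (ψBCD s) * (∑ p, conj' (ψABC p) * vB p q s)) * ψACD r
              = ∑ s, conj' (ψBCD s) * (∑ p, conj' (ψABC p) * (vB p q s * ψACD r)) := by
                simp only [Finset.mul_sum, Finset.sum_mul]
                exact Finset.sum_congr rfl fun s _ => Finset.sum_congr rfl fun p _ => by ring
            _ = ∑ s, conj' (ψBCD s) * (∑ p, conj' (ψABC p) * (vC p r s * ψABD q)) :=
                Finset.sum_congr rfl fun s _ => congrArg _
                  (Finset.sum_congr rfl fun p _ => by rw [← hfB p q r s, hfC p q r s])
      _ = (∑ r, conj' (ψACD r) * (∑ s, conj' (ψBCD s) *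
            (∑ p, conj' (ψABC p) * vC p r s))) * ψABD q := by
          simp only [Finset.mul_sum, Finset.sum_mul]
          exact Finset.sum_congr rfl fun r _ => Finset.sum_congr rfl fun s _ =>
            Finset.sum_congr rfl fun p _ => by ring
  -- the contracted vector is proportional to the source state
  have hΛ3 : ∀ p q r s, (∑ k, conj' (W k (p, q, r, s)) * ΦA k)
      = (∑ r', conj' (ψACD r') * (∑ s', conj' (ψBCD s') *
          (∑ p', conj' (ψABC p') * vC p' r' s'))) *
        (ψABC p * ψABD q * ψACD r * ψBCD s) := by
    intro p q r s
    rw [hfD p q r s, hg1 q r s, hg2 q r, hg3 q]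
    ring
  -- the proportionality constant vanishes
  have hcoiso : ∀ k k', ∑ x, W k x * conj' (W k' x) = if k = k' then 1 else 0 := by
    intro k k'
    have := bigW_coiso UAB UAC UAD UBC UBD UCD hUAB.2 hUAC.2 hUAD.2 hUBC.2 hUBD.2 hUCD.2 k k'
    rwa [hWdef] at this
  have hsSrc : ∑ x, conj' (srcVec ψABC ψABD ψACD ψBCD x) * srcVec ψABC ψABD ψACD ψBCD x
      = 1 := by
    calc ∑ x, conj' (srcVec ψABC ψABD ψACD ψBCD x) * srcVec ψABC ψABD ψACD ψBCD x
        = ∑ x : (iABC_AB × iABC_AC × iABC_BC) × (iABD_AB × iABD_AD × iABD_BD) ×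
            (iACD_AC × iACD_AD × iACD_CD) × (iBCD_BC × iBCD_BD × iBCD_CD),
          ((fun p => conj' (ψABC p) * ψABC p) x.1) * ((fun q => conj' (ψABD q) * ψABD q) x.2.1)
            * ((fun r => conj' (ψACD r) * ψACD r) x.2.2.1)
            * ((fun s => conj' (ψBCD s) * ψBCD s) x.2.2.2) :=
          Finset.sum_congr rfl fun x _ => by simp only [srcVec, map_mul]; ring
      _ = (∑ p, conj' (ψABC p) * ψABC p) * (∑ q, conj' (ψABD q) * ψABD q) *
          (∑ r, conj' (ψACD r) * ψACD r) * (∑ s, conj' (ψBCD s) * ψBCD s) :=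
          CoordAux.sum4_factor (fun p => conj' (ψABC p) * ψABC p)
            (fun q => conj' (ψABD q) * ψABD q) (fun r => conj' (ψACD r) * ψACD r)
            (fun s => conj' (ψBCD s) * ψBCD s)
      _ = 1 := by rw [hsABC, hsABD, hsACD, hsBCD]; norm_num
  have hswap : (∑ x, conj' (srcVec ψABC ψABD ψACD ψBCD x) * (∑ k, conj' (W k x) * ΦA k))
      = ip Φ ΦA := by
    calc (∑ x, conj' (srcVec ψABC ψABD ψACD ψBCD x) * (∑ k, conj' (W k x) * ΦA k))
        = ∑ x, ∑ k, conj' (W k x * srcVec ψABC ψABD ψACD ψBCD x) * ΦA k :=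
          Finset.sum_congr rfl fun x _ => by
            rw [Finset.mul_sum]
            exact Finset.sum_congr rfl fun k _ => by rw [map_mul]; ring
      _ = ∑ k, ∑ x, conj' (W k x * srcVec ψABC ψABD ψACD ψBCD x) * ΦA k := Finset.sum_comm
      _ = ∑ k, conj' (Φ k) * ΦA k := by
          refine Finset.sum_congr rfl fun k _ => ?_
          rw [← Finset.sum_mul, hΦval k, map_sum]
      _ = ip Φ ΦA := rfl
  have hconst : (∑ r', conj' (ψACD r') * (∑ s', conj' (ψBCD s') *
      (∑ p', conj' (ψABC p') * vC p' r' s'))) = 0 := by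
    have h1 : (∑ x, conj' (srcVec ψABC ψABD ψACD ψBCD x) * (∑ k, conj' (W k x) * ΦA k))
        = (∑ r', conj' (ψACD r') * (∑ s', conj' (ψBCD s') *
          (∑ p', conj' (ψABC p') * vC p' r' s'))) := by
      calc (∑ x, conj' (srcVec ψABC ψABD ψACD ψBCD x) * (∑ k, conj' (W k x) * ΦA k))
          = ∑ x, conj' (srcVec ψABC ψABD ψACD ψBCD x) *
            ((∑ r', conj' (ψACD r') * (∑ s', conj' (ψBCD s') *
              (∑ p', conj' (ψABC p') * vC p' r' s'))) * srcVec ψABC ψABD ψACD ψBCD x) := by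
            refine Finset.sum_congr rfl fun x _ => ?_
            obtain ⟨p, q, r, s⟩ := x
            rw [hΛ3 p q r s]
            simp only [srcVec]
        _ = _ := CoordAux.sum_conj_smul _ _ hsSrc
    rw [← h1, hswap, hOA]
  have hΛ0 : ∀ p q r s, (∑ k, conj' (W k (p, q, r, s)) * ΦA k) = 0 := by
    intro p q r s
    rw [hΛ3 p q r s, hconst, zero_mul]
  -- but its norm is one: contradiction
  have hone : (∑ x, conj' (∑ k, conj' (W k x) * ΦA k) * (∑ k, conj' (W k x) * ΦA k)) = 1 := by
    calc (∑ x, conj' (∑ k, conj' (W k x) * ΦA k) * (∑ k, conj' (W k x) * ΦA k))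
        = ∑ x, ∑ k, (W k x * conj' (ΦA k)) * (∑ k', conj' (W k' x) * ΦA k') := by
          refine Finset.sum_congr rfl fun x _ => ?_
          rw [show conj' (∑ k, conj' (W k x) * ΦA k) = ∑ k, W k x * conj' (ΦA k) from by
            rw [map_sum]
            exact Finset.sum_congr rfl fun k _ => by rw [map_mul, Complex.conj_conj],
            Finset.sum_mul]
      _ = ∑ x, ∑ k, ∑ k', (W k x * conj' (ΦA k)) * (conj' (W k' x) * ΦA k') :=
          Finset.sum_congr rfl fun x _ => Finset.sum_congr rfl fun k _ => by
            rw [Finset.mul_sum]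
      _ = ∑ k, ∑ k', (conj' (ΦA k) * ΦA k') * (∑ x, W k x * conj' (W k' x)) := by
          rw [Finset.sum_comm]
          refine Finset.sum_congr rfl fun k _ => ?_
          rw [Finset.sum_comm]
          refine Finset.sum_congr rfl fun k' _ => ?_
          rw [Finset.mul_sum]
          exact Finset.sum_congr rfl fun x _ => by ring
      _ = ∑ k, ∑ k', (conj' (ΦA k) * ΦA k') * (if k = k' then 1 else 0) :=
          Finset.sum_congr rfl fun k _ => Finset.sum_congr rfl fun k' _ => by
            rw [hcoiso k k']
      _ = ∑ k, conj' (ΦA k) * ΦA k := by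
          refine Finset.sum_congr rfl fun k _ => ?_
          simp [mul_ite, Finset.sum_ite_eq]
      _ = 1 := hAA
  have hzero : (∑ x, conj' (∑ k, conj' (W k x) * ΦA k) * (∑ k, conj' (W k x) * ΦA k)) = 0 := by
    refine Finset.sum_eq_zero fun x _ => ?_
    obtain ⟨p, q, r, s⟩ := x
    rw [hΛ0 p q r s, mul_zero]
  exact absurd (hzero.symm.trans hone) (by norm_num)

end
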